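/- Let i ∈ Σ_{n+1}, let k ∈ [n], and let t be the node of G(i) at which the wires ℓ_k and ℓ_{n+1} intersect. Then there exists a rigorous path P ∈ GP(i) (in G(i,k)) such that: t is the unique peak of P; P switches from ℓ_k to ℓ_{n+1} at t; P stays below the wire ℓ_{n+1}; and in its wire-expression ℓ_{r_p} → ⋯ → ℓ_{r_1} → ℓ_k → ℓ_{n+1} → ℓ_{s_q} → ⋯ → ℓ_{s_1}, the sequence r_1, …, r_p is increasing and the sequence s_1, …, s_q is decreasing. -/

import Mathlib

open scoped Classical

noncomputable section

namespace StringPolytope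

/-! ### Words, reduced words, two-moves -/

/-- the simple transposition `s_a = (a, a+1)` acting on `ℕ` (wires are `1, …, n+1`). -/
def sTrans (a : ℕ) : Equiv.Perm ℕ := Equiv.swap a (a + 1)

/-- product `s_{i₁} ⋯ s_{i_N}` of the simple transpositions of a word. -/
def wordProd (w : List ℕ) : Equiv.Perm ℕ := (w.map sTrans).prod

/-- the longest element `w₀` of the symmetric group on `{1, …, n+1}`,
sending `k ↦ n + 2 - k` there and fixing everything else. -/
def longestPerm (n : ℕ) : Equiv.Perm ℕ :=
  Function.Involutive.toPerm
    (fun k => if 1 ≤ k ∧ k ≤ n + 1 then n + 2 - k else k)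
    (by intro k; dsimp only; split_ifs <;> omega)

/-- `w ∈ Σ_{n+1}`: a reduced word of the longest element of `S_{n+1}`,
i.e. a word over `[n] = {1,…,n}` of length `N = n(n+1)/2` whose product is `w₀`. -/
def IsReduced (n : ℕ) (w : List ℕ) : Prop :=
  w.length = n * (n + 1) / 2 ∧ (∀ a ∈ w, 1 ≤ a ∧ a ≤ n) ∧ wordProd w = longestPerm n

/-- a single 2-move: exchange two adjacent letters `(a, b)` with `|a - b| > 1`. -/
def TwoMoveStep (w w' : List ℕ) : Prop :=
  ∃ u v a b, (a + 1 < b ∨ b + 1 < a) ∧ w = u ++ a :: b :: v ∧ w' = u ++ b :: a :: v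

/-- 2-move equivalence of words. -/
def TwoMoveEquiv : List ℕ → List ℕ → Prop := Relation.ReflTransGen TwoMoveStep

/-- `A_n = (1, 2, …, n)`. -/
def ascWord (n : ℕ) : List ℕ := (List.range n).map (· + 1)

/-- `D_n = (n, n-1, …, 1)`. -/
def descWord (n : ℕ) : List ℕ := (ascWord n).reverse

/-! ### The wiring diagram -/

/-- the letter `i_j` of `w` (1-based index `j`); the node `t_j` lies in column `i_j`. -/
def letterAt (w : List ℕ) (j : ℕ) : ℕ := w.getD (j - 1) 0

/-- `1 ≤ j ≤ N`: `t_j` is an actual node of the diagram. -/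
def ValidNode (w : List ℕ) (j : ℕ) : Prop := 1 ≤ j ∧ j ≤ w.length

/-- the column-to-wire assignment just above node `t_j`
(at the top of the diagram, wire `k` is in column `k`). -/
def stateAbove (w : List ℕ) (j : ℕ) : Equiv.Perm ℕ := wordProd (w.take (j - 1))

/-- the column-to-wire assignment just below node `t_j`. -/
def stateBelow (w : List ℕ) (j : ℕ) : Equiv.Perm ℕ := wordProd (w.take j)

/-- one of the two wires crossing at node `t_j` (the one leaving upward-left). -/
def wireX (w : List ℕ) (j : ℕ) : ℕ := stateAbove w j (letterAt w j)

/-- the other wire crossing at node `t_j` (the one leaving upward-right). -/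
def wireY (w : List ℕ) (j : ℕ) : ℕ := stateAbove w j (letterAt w j + 1)

/-- the node `t_j` lies on the wire `ℓ_r`. -/
def NodeOnWire (w : List ℕ) (j r : ℕ) : Prop := wireX w j = r ∨ wireY w j = r

/-- given one wire `r` at node `t_j`, the other wire crossing there. -/
def otherWire (w : List ℕ) (j r : ℕ) : ℕ := if wireX w j = r then wireY w j else wireX w j

/-- the column of wire `ℓ_r` at the height of node `t_j`. -/
def wireCol (w : List ℕ) (j r : ℕ) : ℕ := (stateBelow w j).symm r

/-- node `t_j` lies strictly below the wire `ℓ_{n+1}`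
(which runs from the bottom-left corner to the top-right corner). -/
def BelowWireLast (n : ℕ) (w : List ℕ) (j : ℕ) : Prop :=
  wireCol w j (n + 1) < letterAt w j

/-- node `t_j` lies strictly above the wire `ℓ_{n+1}`. -/
def AboveWireLast (n : ℕ) (w : List ℕ) (j : ℕ) : Prop :=
  letterAt w j + 1 < wireCol w j (n + 1)

/-- node `t_j` lies strictly below the wire `ℓ_1`
(which runs from the bottom-right corner to the top-left corner). -/
def BelowWireOne (w : List ℕ) (j : ℕ) : Prop :=
  letterAt w j + 1 < wireCol w j 1

/-- node `t_j` lies strictly above the wire `ℓ_1`. -/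
def AboveWireOne (w : List ℕ) (j : ℕ) : Prop :=
  wireCol w j 1 < letterAt w j

/-! ### Rigorous (Gleizer–Postnikov) paths

A path in `G(i, k)` is encoded by `k` together with the list of its switching
nodes, in order of travel.  Wires `ℓ_1, …, ℓ_k` are oriented upward
(decreasing node index) and the remaining wires downward. -/

/-- the (1-based indices of the) nodes lying on wire `ℓ_r`, in order of increasing index. -/
def nodesOn (w : List ℕ) (r : ℕ) : List ℕ :=
  ((List.range w.length).map (· + 1)).filter (fun j => decide (NodeOnWire w j r))

/-- nodes on wire `ℓ_r` strictly between the nodes `t_a` and `t_b`. -/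
def segList (w : List ℕ) (r a b : ℕ) : List ℕ :=
  (nodesOn w r).filter (fun j => decide (min a b < j ∧ j < max a b))

/-- nodes on wire `ℓ_r` strictly below the node `t_a`. -/
def tailList (w : List ℕ) (r a : ℕ) : List ℕ :=
  (nodesOn w r).filter (fun j => decide (a < j))

/-- a forbidden fragment of `G(i, k)`: the path passes straight through node `t_j`
travelling along the wire `ℓ_r`, where the other wire `ℓ_b` crossing there has the same
orientation as `ℓ_r` and (`r < b` if both upward, `r > b` if both downward). -/
def Forbidden (w : List ℕ) (k j r : ℕ) : Prop :=
  (r ≤ k ∧ otherWire w j r ≤ k ∧ r < otherWire w j r) ∨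
  (k < r ∧ k < otherWire w j r ∧ otherWire w j r < r)

/-- travelling in `G(i,k)`: currently on wire `ℓ_r` at node `t_a` (just switched there),
with future switching nodes `ms`; the travel is legal and ends at `L_{k+1}`. -/
def TravelOK (w : List ℕ) (k : ℕ) : ℕ → ℕ → List ℕ → Prop
  | r, a, [] => r = k + 1 ∧ ∀ j ∈ tailList w r a, ¬ Forbidden w k j r
  | r, a, m :: ms =>
      ValidNode w m ∧ NodeOnWire w m r ∧
      (if r ≤ k then m < a else a < m) ∧
      (∀ j ∈ segList w r a m, ¬ Forbidden w k j r) ∧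
      TravelOK w k (otherWire w m r) m ms

/-- all nodes visited after the switch at node `t_a` onto wire `ℓ_r`. -/
def visitTail (w : List ℕ) : ℕ → ℕ → List ℕ → List ℕ
  | r, a, [] => tailList w r a
  | r, a, m :: ms => segList w r a m ++ m :: visitTail w (otherWire w m r) m ms

/-- the list of all nodes visited by the path (switching nodes and straight passes). -/
def visitList (w : List ℕ) (k : ℕ) : List ℕ → List ℕ
  | [] => []
  | m :: ms => tailList w k m ++ m :: visitTail w (otherWire w m k) m ms

/-- `(k, ms)` encodes a rigorous (Gleizer–Postnikov) path in `G(i, k)`: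
it starts at `L_k` going up the wire `ℓ_k`, switches wires exactly at the nodes
listed in `ms`, respects the orientation, ends at `L_{k+1}`, contains no forbidden
fragment and passes through each node at most once. -/
def IsGPPath (n : ℕ) (w : List ℕ) (k : ℕ) (ms : List ℕ) : Prop :=
  1 ≤ k ∧ k ≤ n ∧
  (match ms with
   | [] => False
   | m :: rest =>
       ValidNode w m ∧ NodeOnWire w m k ∧
       (∀ j ∈ tailList w k m, ¬ Forbidden w k j k) ∧
       TravelOK w k (otherWire w m k) m rest) ∧
  (visitList w k ms).Nodup

/-- the set `GP(i)` of all rigorous paths of `G(i)`. -/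
def GP (n : ℕ) (w : List ℕ) : Set (ℕ × List ℕ) := {p | IsGPPath n w p.1 p.2}

/-- `|GP(i)|`, the number of rigorous paths. -/
def numGP (n : ℕ) (w : List ℕ) : ℕ := (GP n w).ncard

/-- the successive switches of a path: `(node, from-wire, to-wire)`. -/
def pathSwitches (w : List ℕ) : ℕ → List ℕ → List (ℕ × ℕ × ℕ)
  | _, [] => []
  | r, m :: ms => (m, r, otherWire w m r) :: pathSwitches w (otherWire w m r) ms

/-- the wire-expression of a path: the successive wires travelled. -/
def wireSeq (w : List ℕ) : ℕ → List ℕ → List ℕ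
  | r, [] => [r]
  | r, m :: ms => r :: wireSeq w (otherWire w m r) ms

/-- the peaks of a path: switching nodes where the path switches from an
upward wire to a downward wire. -/
def peaks (w : List ℕ) (k : ℕ) (ms : List ℕ) : List ℕ :=
  ((pathSwitches w k ms).filter (fun e => decide (e.2.1 ≤ k ∧ k < e.2.2))).map (·.1)

/-! ### String cone, `λ`-cone, string polytope -/

/-- `N = n(n+1)/2`, the number of nodes. -/
abbrev Dim (n : ℕ) : ℕ := n * (n + 1) / 2

/-- the coefficient `a_j` of `t_j` in the string inequality of the path `(k, ms)`:
`+1` if the path switches at `t_j` from `ℓ_r` to `ℓ_s` with `r < s`,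
`-1` if it switches with `r > s`, and `0` otherwise. -/
def coeff (w : List ℕ) (k : ℕ) (ms : List ℕ) (j : ℕ) : ℝ :=
  ((pathSwitches w k ms).map (fun e =>
    if e.1 = j then (if e.2.1 < e.2.2 then (1 : ℝ) else -1) else 0)).sum

/-- the (primitive inward normal) coefficient vector of the string inequality of a path. -/
def normalVec (n : ℕ) (w : List ℕ) (p : ℕ × List ℕ) : Fin (Dim n) → ℝ :=
  fun j => coeff w p.1 p.2 ((j : ℕ) + 1)

/-- the left-hand side `∑ a_j t_j` of the string inequality of the path `p`. -/
def stringIneq (n : ℕ) (w : List ℕ) (p : ℕ × List ℕ) (t : Fin (Dim n) → ℝ) : ℝ :=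
  ∑ j : Fin (Dim n), normalVec n w p j * t j

/-- the string cone `C_i ⊆ ℝ^N`. -/
def stringCone (n : ℕ) (w : List ℕ) : Set (Fin (Dim n) → ℝ) :=
  {t | ∀ p ∈ GP n w, 0 ≤ stringIneq n w p t}

/-- the polyhedron cut out by all string inequalities except the one of `p₀`. -/
def stringConeExcept (n : ℕ) (w : List ℕ) (p₀ : ℕ × List ℕ) : Set (Fin (Dim n) → ℝ) :=
  {t | ∀ p ∈ GP n w, p ≠ p₀ → 0 ≤ stringIneq n w p t}

/-- the coefficient `a_k` in the `λ`-inequality of node `t_j`: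
`1` if `t_k` is one column left or right of `t_j`, `-2` if in the same column. -/
def lamCoeff (w : List ℕ) (j k : ℕ) : ℝ :=
  if letterAt w k = letterAt w j then -2
  else if letterAt w k = letterAt w j + 1 ∨ letterAt w k + 1 = letterAt w j then 1
  else 0

/-- the `λ`-inequality of node `t_{j+1}`:
`t_j ≤ λ_{i_j} + ∑_{k > j} a_k t_k`. -/
def LamIneq (n : ℕ) (w : List ℕ) (lam : ℕ → ℤ) (j : Fin (Dim n)) (t : Fin (Dim n) → ℝ) : Prop :=
  t j ≤ (lam (letterAt w ((j : ℕ) + 1)) : ℝ) +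
    ∑ k : Fin (Dim n),
      (if (j : ℕ) < (k : ℕ) then lamCoeff w ((j : ℕ) + 1) ((k : ℕ) + 1) else 0) * t k

/-- the `λ`-cone `C_i^λ ⊆ ℝ^N`. -/
def lamCone (n : ℕ) (w : List ℕ) (lam : ℕ → ℤ) : Set (Fin (Dim n) → ℝ) :=
  {t | ∀ j, LamIneq n w lam j t}

/-- the polyhedron cut out by all `λ`-inequalities except the one of `j₀`. -/
def lamConeExcept (n : ℕ) (w : List ℕ) (lam : ℕ → ℤ) (j₀ : Fin (Dim n)) :
    Set (Fin (Dim n) → ℝ) :=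
  {t | ∀ j, j ≠ j₀ → LamIneq n w lam j t}

/-- the string polytope `Δ_i(λ) = C_i ∩ C_i^λ`. -/
def stringPolytope (n : ℕ) (w : List ℕ) (lam : ℕ → ℤ) : Set (Fin (Dim n) → ℝ) :=
  stringCone n w ∩ lamCone n w lam

/-- `λ = λ_1 ϖ_1 + ⋯ + λ_n ϖ_n` is a dominant integral weight: all `λ_j ≥ 0`. -/
def Dominant (n : ℕ) (lam : ℕ → ℤ) : Prop := ∀ j, 1 ≤ j → j ≤ n → 0 ≤ lam j

/-- `λ` is a regular dominant integral weight: all `λ_j > 0`. -/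
def RegularDominant (n : ℕ) (lam : ℕ → ℤ) : Prop := ∀ j, 1 ≤ j → j ≤ n → 0 < lam j

/-! ### Unimodular equivalence, Gelfand–Cetlin polytope, facets -/

/-- `P` and `Q` are unimodularly equivalent: `Q = M(P) + v` with `M ∈ GL(m, ℤ)`, `v ∈ ℤ^m`. -/
def UnimodEquiv {m : ℕ} (P Q : Set (Fin m → ℝ)) : Prop :=
  ∃ (M : Matrix (Fin m) (Fin m) ℤ) (v : Fin m → ℤ), IsUnit M.det ∧
    Q = (fun x i => (∑ j, (M i j : ℝ) * x j) + (v i : ℝ)) '' P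

/-- the entry `x_{k,j}` (`1 ≤ j ≤ k ≤ n+1`) of a Gelfand–Cetlin pattern, where the
top row is `x_{n+1,j} = λ_j + ⋯ + λ_n` and `x_{n+1,n+1} = 0`; the pair `(k, j)` is
encoded as the coordinate `k(k-1)/2 + (j-1)` of `ℝ^N`. -/
def gcX (n : ℕ) (lam : ℕ → ℤ) (x : Fin (Dim n) → ℝ) (k j : ℕ) : ℝ :=
  if k = n + 1 then (if j ≤ n then ∑ t ∈ Finset.Icc j n, (lam t : ℝ) else 0)
  else if h : k * (k - 1) / 2 + (j - 1) < Dim n then x ⟨k * (k - 1) / 2 + (j - 1), h⟩ else 0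

/-- the Gelfand–Cetlin polytope `GC(λ) ⊆ ℝ^N`. -/
def GCPolytope (n : ℕ) (lam : ℕ → ℤ) : Set (Fin (Dim n) → ℝ) :=
  {x | ∀ k j, 1 ≤ k → k ≤ n → 1 ≤ j → j ≤ k →
      gcX n lam x k j ≤ gcX n lam x (k + 1) j ∧
      gcX n lam x (k + 1) (j + 1) ≤ gcX n lam x k j}

/-- a face of a convex set: a convex extreme subset. -/
def IsFaceSet {m : ℕ} (S F : Set (Fin m → ℝ)) : Prop := IsExtreme ℝ S F ∧ Convex ℝ F

/-- a facet: a maximal proper face. -/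
def IsFacet {m : ℕ} (S F : Set (Fin m → ℝ)) : Prop :=
  IsFaceSet S F ∧ F ≠ S ∧ ∀ G, IsFaceSet S G → G ≠ S → F ⊆ G → F = G

/-- the number of facets. -/
def numFacets {m : ℕ} (S : Set (Fin m → ℝ)) : ℕ := {F | IsFacet S F}.ncard

/-- combinatorial equivalence: an inclusion-preserving bijection between face lattices. -/
def CombEquiv {m : ℕ} (S T : Set (Fin m → ℝ)) : Prop :=
  ∃ e : {F // IsFaceSet S F} ≃ {F // IsFaceSet T F},
    ∀ F G : {F // IsFaceSet S F}, F.1 ⊆ G.1 ↔ (e F).1 ⊆ (e G).1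

/-! ### Indices, contractions and extensions -/

/-- the `D`-index `ind_D(i) = |i_D^+|` for a decomposition `i ∼ i_D^- D_n i_D^+`
(independent of the decomposition). -/
def indD (n : ℕ) (w : List ℕ) : ℕ :=
  sInf {s | ∃ u v : List ℕ, v.length = s ∧ TwoMoveEquiv w (u ++ descWord n ++ v)}

/-- the `A`-index `ind_A(i) = |i_A^+|` for a decomposition `i ∼ i_A^- A_n i_A^+`. -/
def indA (n : ℕ) (w : List ℕ) : ℕ :=
  sInf {s | ∃ u v : List ℕ, v.length = s ∧ TwoMoveEquiv w (u ++ ascWord n ++ v)}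

/-- `w'` is a `D`-contraction `C_D(w) = i_D^- (i_D^+ - 1)` of `w ∈ Σ_{n+1}`. -/
def IsContractionD (n : ℕ) (w w' : List ℕ) : Prop :=
  ∃ u v : List ℕ, TwoMoveEquiv w (u ++ descWord n ++ v) ∧ w' = u ++ v.map (· - 1)

/-- `w'` is an `A`-contraction `C_A(w) = (i_A^- - 1) i_A^+` of `w ∈ Σ_{n+1}`. -/
def IsContractionA (n : ℕ) (w w' : List ℕ) : Prop :=
  ∃ u v : List ℕ, TwoMoveEquiv w (u ++ ascWord n ++ v) ∧ w' = u.map (· - 1) ++ v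

/-- the `D`-extension `E_D(s) : Σ_{n+1} → Σ_{n+2}`,
`i = i^-(s) i^+(s) ↦ i^-(s) D_{n+1} (i^+(s) + 1)` where `|i^+(s)| = s`. -/
def extD (n : ℕ) (s : ℕ) (w : List ℕ) : List ℕ :=
  w.take (w.length - s) ++ descWord (n + 1) ++ (w.drop (w.length - s)).map (· + 1)

/-- the `A`-extension `E_A(s) : Σ_{n+1} → Σ_{n+2}`,
`i = i^-(s) i^+(s) ↦ (i^-(s) + 1) A_{n+1} i^+(s)`. -/
def extA (n : ℕ) (s : ℕ) (w : List ℕ) : List ℕ :=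
  (w.take (w.length - s)).map (· + 1) ++ ascWord (n + 1) ++ w.drop (w.length - s)

/-- there exists `(σ_1, …, σ_n) ∈ {A, D}^n` (here `true = D`, `false = A`) such that
`ind_{σ_k}(C_{σ_{k+1}} ∘ ⋯ ∘ C_{σ_n}(i)) = 0` for all `k = n, …, 1`. -/
def SimplicialWord (n : ℕ) (w : List ℕ) : Prop :=
  ∃ (σ : ℕ → Bool) (c : ℕ → List ℕ), c n = w ∧
    ∀ k, 1 ≤ k → k ≤ n →
      (if σ k then IsContractionD k (c k) (c (k - 1)) ∧ indD k (c k) = 0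
       else IsContractionA k (c k) (c (k - 1)) ∧ indA k (c k) = 0)


/-- the `D`-coindex `coind_D(i) = |i_D^-|`. -/
def coindD (n : ℕ) (w : List ℕ) : ℕ :=
  sInf {s | ∃ u v : List ℕ, u.length = s ∧ TwoMoveEquiv w (u ++ descWord n ++ v)}

/-- the `A`-coindex `coind_A(i) = |i_A^-|`. -/
def coindA (n : ℕ) (w : List ℕ) : ℕ :=
  sInf {s | ∃ u v : List ℕ, u.length = s ∧ TwoMoveEquiv w (u ++ ascWord n ++ v)}

/-- the `a`-th (0-based) coordinate of a point of `ℝ^N`. -/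
def entry (n : ℕ) (t : Fin (Dim n) → ℝ) (a : ℕ) : ℝ :=
  if h : a < Dim n then t ⟨a, h⟩ else 0

/-- the product of cones
`t_1 ≥ 0`, `t_2 ≥ t_3 ≥ 0`, …, `t_{N-n+1} ≥ ⋯ ≥ t_N ≥ 0` (in `ℝ^N`, 1-based:
for `k = 1, …, n` the chain `t_{k(k-1)/2+1} ≥ ⋯ ≥ t_{k(k-1)/2+k} ≥ 0`). -/
def chainCone (n : ℕ) : Set (Fin (Dim n) → ℝ) :=
  {t | ∀ k j, 1 ≤ k → k ≤ n → 1 ≤ j → j ≤ k →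
    (if j = k then 0 else entry n t (k * (k - 1) / 2 + j)) ≤
      entry n t (k * (k - 1) / 2 + (j - 1))}


/-! ### Auxiliary machinery for Statement 10 -/

namespace S10

/-- column of wire `r` at level `h` (just below node `t_h`). -/
def col (w : List ℕ) (h r : ℕ) : ℕ := (wordProd (w.take h)).symm r

lemma sTrans_apply (a x : ℕ) :
    sTrans a x = if x = a then a + 1 else if x = a + 1 then a else x := by
  rw [sTrans, Equiv.swap_apply_def]

lemma wordProd_append (l₁ l₂ : List ℕ) :
    wordProd (l₁ ++ l₂) = wordProd l₁ * wordProd l₂ := by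
  simp [wordProd]

lemma take_concat {w : List ℕ} {h : ℕ} (hh : h < w.length) :
    w.take (h + 1) = w.take h ++ [w.getD h 0] := by
  rw [List.take_succ, List.getElem?_eq_getElem hh, List.getD_eq_getElem?_getD,
    List.getElem?_eq_getElem hh]
  rfl

lemma prod_take_succ {w : List ℕ} {h : ℕ} (hh : h < w.length) :
    wordProd (w.take (h + 1)) = wordProd (w.take h) * sTrans (w.getD h 0) := by
  rw [take_concat hh, wordProd_append]
  simp [wordProd]

lemma col_succ {w : List ℕ} {h : ℕ} (hh : h < w.length) (r : ℕ) :
    col w (h + 1) r = sTrans (w.getD h 0) (col w h r) := by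
  unfold col
  rw [prod_take_succ hh]
  rfl

lemma col_zero (w : List ℕ) (r : ℕ) : col w 0 r = r := by
  simp [col, wordProd]; rfl

lemma col_inj (w : List ℕ) (h : ℕ) {r r' : ℕ} (hc : col w h r = col w h r') : r = r' :=
  (Equiv.injective _) hc

lemma letter_bounds {n : ℕ} {w : List ℕ} (hw : ∀ a ∈ w, 1 ≤ a ∧ a ≤ n)
    {h : ℕ} (hh : h < w.length) : 1 ≤ w.getD h 0 ∧ w.getD h 0 ≤ n := by
  have : w.getD h 0 ∈ w := by
    rw [List.getD_eq_getElem?_getD, List.getElem?_eq_getElem hh]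
    exact List.getElem_mem _
  exact hw _ this

lemma sTrans_mem {n a x : ℕ} (ha1 : 1 ≤ a) (ha2 : a ≤ n) (hx1 : 1 ≤ x) (hx2 : x ≤ n + 1) :
    1 ≤ sTrans a x ∧ sTrans a x ≤ n + 1 := by
  rw [sTrans_apply]; split_ifs <;> omega

lemma wordProd_apply_mem {n : ℕ} : ∀ (l : List ℕ), (∀ a ∈ l, 1 ≤ a ∧ a ≤ n) →
    ∀ {x : ℕ}, 1 ≤ x → x ≤ n + 1 → 1 ≤ wordProd l x ∧ wordProd l x ≤ n + 1 := by
  intro l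
  induction l with
  | nil => intro _ x h1 h2; simp [wordProd]; omega
  | cons a l ih =>
      intro hl x h1 h2
      have h' := ih (fun b hb => hl b (List.mem_cons_of_mem _ hb)) h1 h2
      have ha := hl a (List.mem_cons_self)
      have : wordProd (a :: l) x = sTrans a (wordProd l x) := by
        simp [wordProd]
      rw [this]
      exact sTrans_mem ha.1 ha.2 h'.1 h'.2

lemma wordProd_symm_mem {n : ℕ} : ∀ (l : List ℕ), (∀ a ∈ l, 1 ≤ a ∧ a ≤ n) →
    ∀ {x : ℕ}, 1 ≤ x → x ≤ n + 1 → 1 ≤ (wordProd l).symm x ∧ (wordProd l).symm x ≤ n + 1 := by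
  intro l
  induction l with
  | nil => intro _ x h1 h2; simp [wordProd]; exact ⟨h1, h2⟩
  | cons a l ih =>
      intro hl x h1 h2
      have ha := hl a (List.mem_cons_self)
      have hs := sTrans_mem (n := n) ha.1 ha.2 h1 h2
      have h' := ih (fun b hb => hl b (List.mem_cons_of_mem _ hb)) hs.1 hs.2
      have hxx : (wordProd (a :: l)).symm x = (wordProd l).symm (sTrans a x) := by
        have h0 : wordProd (a :: l) = sTrans a * wordProd l := by simp [wordProd]
        rw [h0]
        rfl
      rw [hxx]
      exact h'

lemma col_mem {n : ℕ} {w : List ℕ} (hw : ∀ a ∈ w, 1 ≤ a ∧ a ≤ n)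
    (h : ℕ) {r : ℕ} (h1 : 1 ≤ r) (h2 : r ≤ n + 1) :
    1 ≤ col w h r ∧ col w h r ≤ n + 1 :=
  wordProd_symm_mem _ (fun a ha => hw a (List.take_subset _ _ ha)) h1 h2

/-! node `t_{h+1}` facts -/

lemma stateAbove_eq (w : List ℕ) (h : ℕ) : stateAbove w (h + 1) = wordProd (w.take h) := rfl

lemma wireX_eq (w : List ℕ) (h : ℕ) :
    wireX w (h + 1) = wordProd (w.take h) (w.getD h 0) := rfl

lemma wireY_eq (w : List ℕ) (h : ℕ) :
    wireY w (h + 1) = wordProd (w.take h) (w.getD h 0 + 1) := rfl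

lemma colX_above (w : List ℕ) (h : ℕ) : col w h (wireX w (h + 1)) = w.getD h 0 :=
  Equiv.symm_apply_apply _ _

lemma colY_above (w : List ℕ) (h : ℕ) : col w h (wireY w (h + 1)) = w.getD h 0 + 1 :=
  Equiv.symm_apply_apply _ _

lemma colX_below {w : List ℕ} {h : ℕ} (hh : h < w.length) :
    col w (h + 1) (wireX w (h + 1)) = w.getD h 0 + 1 := by
  rw [col_succ hh, colX_above, sTrans_apply]; simp

lemma colY_below {w : List ℕ} {h : ℕ} (hh : h < w.length) :
    col w (h + 1) (wireY w (h + 1)) = w.getD h 0 := by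
  rw [col_succ hh, colY_above, sTrans_apply]
  have : w.getD h 0 + 1 ≠ w.getD h 0 := by omega
  simp [this]

lemma wireX_ne_wireY (w : List ℕ) (h : ℕ) : wireX w (h + 1) ≠ wireY w (h + 1) := by
  intro hxy
  have := congrArg (col w h) hxy
  rw [colX_above, colY_above] at this
  omega

lemma col_above_other {w : List ℕ} {h : ℕ} {z : ℕ}
    (hzX : z ≠ wireX w (h + 1)) (hzY : z ≠ wireY w (h + 1)) :
    col w h z ≠ w.getD h 0 ∧ col w h z ≠ w.getD h 0 + 1 := by
  constructor
  · intro hc; exact hzX (col_inj w h (hc.trans (colX_above w h).symm))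
  · intro hc; exact hzY (col_inj w h (hc.trans (colY_above w h).symm))

lemma col_below_other {w : List ℕ} {h : ℕ} (hh : h < w.length) {z : ℕ}
    (hzX : z ≠ wireX w (h + 1)) (hzY : z ≠ wireY w (h + 1)) :
    col w (h + 1) z = col w h z := by
  have ho := col_above_other hzX hzY
  rw [col_succ hh, sTrans_apply, if_neg ho.1, if_neg ho.2]

/-! ### inversion counting : at each node the smaller wire crosses left-to-right -/

/-- number of inverted pairs of columns in `[1, n+1]`. -/
def invs (n : ℕ) (σ : Equiv.Perm ℕ) : ℕ :=
  (((Finset.Icc 1 (n + 1)) ×ˢ (Finset.Icc 1 (n + 1))).filter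
    fun p => p.1 < p.2 ∧ σ p.2 < σ p.1).card

lemma invs_one (n : ℕ) : invs n 1 = 0 := by
  rw [invs, Finset.card_eq_zero, Finset.filter_eq_empty_iff]
  intro p _
  simp only [Equiv.Perm.one_apply]
  omega

lemma sTrans_lt {a c d : ℕ} (hcd : c < d) (hne : ¬(c = a ∧ d = a + 1)) :
    sTrans a c < sTrans a d := by
  rw [sTrans_apply, sTrans_apply]
  split_ifs <;> omega

lemma invs_step {n : ℕ} (σ : Equiv.Perm ℕ) {a : ℕ} (ha1 : 1 ≤ a) (ha2 : a ≤ n)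
    (hlt : σ a < σ (a + 1)) : invs n (σ * sTrans a) = invs n σ + 1 := by
  classical
  set D := (Finset.Icc 1 (n + 1)) ×ˢ (Finset.Icc 1 (n + 1)) with hD
  set S := D.filter (fun p => p.1 < p.2 ∧ σ p.2 < σ p.1) with hS
  set S' := D.filter (fun p => p.1 < p.2 ∧ (σ * sTrans a) p.2 < (σ * sTrans a) p.1) with hS'
  have happ : ∀ x, (σ * sTrans a) x = σ (sTrans a x) := fun x => rfl
  have hGinj : Function.Injective (fun p : ℕ × ℕ => (sTrans a p.1, sTrans a p.2)) := by
    intro p q hpq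
    simp only [Prod.mk.injEq] at hpq
    exact Prod.ext ((Equiv.injective _) hpq.1) ((Equiv.injective _) hpq.2)
  have hGG : ∀ p : ℕ × ℕ, (sTrans a (sTrans a p.1), sTrans a (sTrans a p.2)) = p := by
    intro p
    have h1 : sTrans a (sTrans a p.1) = p.1 := Equiv.swap_apply_self _ _ _
    have h2 : sTrans a (sTrans a p.2) = p.2 := Equiv.swap_apply_self _ _ _
    rw [h1, h2]
  have hmemD : ∀ p : ℕ × ℕ, p ∈ D → (sTrans a p.1, sTrans a p.2) ∈ D := by
    intro p hp
    simp only [hD, Finset.mem_product, Finset.mem_Icc] at hp ⊢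
    exact ⟨sTrans_mem ha1 ha2 hp.1.1 hp.1.2, sTrans_mem ha1 ha2 hp.2.1 hp.2.2⟩
  have hkey : S' = insert (a, a + 1) (S.image (fun p => (sTrans a p.1, sTrans a p.2))) := by
    ext p
    simp only [hS', hS, Finset.mem_insert, Finset.mem_image, Finset.mem_filter]
    constructor
    · rintro ⟨hpD, hp12, hpinv⟩
      by_cases hp : p = (a, a + 1)
      · exact Or.inl hp
      · right
        refine ⟨(sTrans a p.1, sTrans a p.2), ⟨hmemD p hpD, ?_, ?_⟩, hGG p⟩
        · exact sTrans_lt hp12 (fun hc => hp (Prod.ext hc.1 hc.2))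
        · show σ (sTrans a p.2) < σ (sTrans a p.1)
          rw [happ, happ] at hpinv
          exact hpinv
    · rintro (hp | ⟨q, ⟨hqD, hq12, hqinv⟩, hq⟩)
      · subst hp
        refine ⟨?_, by omega, ?_⟩
        · simp only [hD, Finset.mem_product, Finset.mem_Icc]; omega
        · rw [happ, happ]
          rw [show sTrans a (a + 1) = a from Equiv.swap_apply_right _ _,
            show sTrans a a = a + 1 from Equiv.swap_apply_left _ _]
          exact hlt
      · subst hq
        have hqne : q ≠ (a, a + 1) := by
          intro hc
          rw [hc] at hqinv
          simp only at hqinv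
          omega
        refine ⟨hmemD q hqD, sTrans_lt hq12 (fun hc => hqne (Prod.ext hc.1 hc.2)), ?_⟩
        show σ (sTrans a (sTrans a q.2)) < σ (sTrans a (sTrans a q.1))
        rw [show sTrans a (sTrans a q.2) = q.2 from Equiv.swap_apply_self _ _ _,
          show sTrans a (sTrans a q.1) = q.1 from Equiv.swap_apply_self _ _ _]
        exact hqinv
  have hnotmem : (a, a + 1) ∉ S.image (fun p => (sTrans a p.1, sTrans a p.2)) := by
    simp only [Finset.mem_image]
    rintro ⟨q, hq, hq2⟩
    have : q = (sTrans a a, sTrans a (a + 1)) := by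
      have := congrArg (fun p : ℕ × ℕ => (sTrans a p.1, sTrans a p.2)) hq2
      simp only at this
      rw [hGG] at this
      rw [this]
    rw [show sTrans a a = a + 1 from Equiv.swap_apply_left _ _,
      show sTrans a (a + 1) = a from Equiv.swap_apply_right _ _] at this
    rw [hS, Finset.mem_filter] at hq
    rw [this] at hq
    simp only at hq
    omega
  rw [invs, invs, ← hS, ← hS', hkey, Finset.card_insert_of_notMem hnotmem,
    Finset.card_image_of_injective _ hGinj]

lemma invs_step' {n : ℕ} (σ : Equiv.Perm ℕ) {a : ℕ} (ha1 : 1 ≤ a) (ha2 : a ≤ n)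
    (hlt : σ (a + 1) < σ a) : invs n σ = invs n (σ * sTrans a) + 1 := by
  have h1 : (σ * sTrans a) a < (σ * sTrans a) (a + 1) := by
    show σ (sTrans a a) < σ (sTrans a (a + 1))
    rw [show sTrans a a = a + 1 from Equiv.swap_apply_left _ _,
      show sTrans a (a + 1) = a from Equiv.swap_apply_right _ _]
    exact hlt
  have := invs_step (σ * sTrans a) ha1 ha2 h1
  rw [mul_assoc, show sTrans a * sTrans a = 1 from Equiv.swap_mul_self _ _, mul_one] at this
  omega

lemma longestPerm_apply (n r : ℕ) :
    longestPerm n r = if 1 ≤ r ∧ r ≤ n + 1 then n + 2 - r else r := rfl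

lemma pairsLT_card (m : ℕ) :
    2 * (((Finset.Icc 1 m) ×ˢ (Finset.Icc 1 m)).filter fun p : ℕ × ℕ => p.1 < p.2).card
      = m * (m - 1) := by
  induction m with
  | zero => simp
  | succ m ih =>
      have hsplit : (((Finset.Icc 1 (m+1)) ×ˢ (Finset.Icc 1 (m+1))).filter
          fun p : ℕ × ℕ => p.1 < p.2)
          = (((Finset.Icc 1 m) ×ˢ (Finset.Icc 1 m)).filter fun p : ℕ × ℕ => p.1 < p.2)
            ∪ (Finset.Icc 1 m).image (fun c => (c, m + 1)) := by
        ext p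
        simp only [Finset.mem_filter, Finset.mem_union, Finset.mem_product, Finset.mem_Icc,
          Finset.mem_image]
        constructor
        · rintro ⟨⟨⟨h1, h2⟩, h3, h4⟩, h5⟩
          by_cases hc : p.2 = m + 1
          · exact Or.inr ⟨p.1, by omega, by rw [← hc]⟩
          · exact Or.inl ⟨⟨⟨h1, by omega⟩, h3, by omega⟩, h5⟩
        · rintro (⟨⟨⟨h1, h2⟩, h3, h4⟩, h5⟩ | ⟨c, hc, hcp⟩)
          · exact ⟨⟨⟨h1, by omega⟩, h3, by omega⟩, h5⟩
          · subst hcp; simp only; omega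
      have hdisj : Disjoint
          (((Finset.Icc 1 m) ×ˢ (Finset.Icc 1 m)).filter fun p : ℕ × ℕ => p.1 < p.2)
          ((Finset.Icc 1 m).image (fun c => (c, m + 1))) := by
        rw [Finset.disjoint_left]
        intro p hp hp'
        simp only [Finset.mem_filter, Finset.mem_product, Finset.mem_Icc] at hp
        simp only [Finset.mem_image] at hp'
        obtain ⟨c, hc, hcp⟩ := hp'
        rw [← hcp] at hp
        simp only at hp
        omega
      have hinj : Function.Injective (fun c : ℕ => (c, m + 1)) := by
        intro x y hxy; simpa using hxy
      have harith : (m + 1) * (m + 1 - 1) = m * (m - 1) + 2 * m := by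
        cases m with
        | zero => simp
        | succ m' =>
            simp only [Nat.add_sub_cancel]
            ring
      rw [hsplit, Finset.card_union_of_disjoint hdisj,
        Finset.card_image_of_injective _ hinj, Nat.card_Icc, harith, ← ih]
      omega

lemma invs_longest (n : ℕ) : 2 * invs n (longestPerm n) = n * (n + 1) := by
  have : ((Finset.Icc 1 (n+1)) ×ˢ (Finset.Icc 1 (n+1))).filter
      (fun p => p.1 < p.2 ∧ longestPerm n p.2 < longestPerm n p.1)
      = ((Finset.Icc 1 (n+1)) ×ˢ (Finset.Icc 1 (n+1))).filter (fun p : ℕ × ℕ => p.1 < p.2) := by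
    apply Finset.filter_congr
    intro p hp
    simp only [Finset.mem_product, Finset.mem_Icc] at hp
    rw [longestPerm_apply, longestPerm_apply]
    constructor
    · exact fun h => h.1
    · intro h
      refine ⟨h, ?_⟩
      rw [if_pos ⟨hp.2.1, hp.2.2⟩, if_pos ⟨hp.1.1, hp.1.2⟩]
      omega
  rw [invs, this, pairsLT_card]
  simp only [Nat.add_sub_cancel]
  ring


lemma invs_take {n : ℕ} {w : List ℕ} (hw : ∀ a ∈ w, 1 ≤ a ∧ a ≤ n)
    (hlen : w.length = n * (n + 1) / 2) (hprod : wordProd w = longestPerm n) :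
    ∀ h, h ≤ w.length → invs n (wordProd (w.take h)) = h := by
  have step : ∀ h, h < w.length →
      invs n (wordProd (w.take (h+1))) = invs n (wordProd (w.take h)) + 1 ∨
      invs n (wordProd (w.take h)) = invs n (wordProd (w.take (h+1))) + 1 := by
    intro h hh
    have ha := letter_bounds hw hh
    set σ := wordProd (w.take h)
    set a := w.getD h 0
    have hne : σ a ≠ σ (a + 1) := fun hc => by
      have := (Equiv.injective σ) hc; omega
    rcases lt_or_gt_of_ne hne with hlt | hgt
    · left; rw [prod_take_succ hh]; exact invs_step σ ha.1 ha.2 hlt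
    · right; rw [prod_take_succ hh]; exact invs_step' σ ha.1 ha.2 hgt
  have hN : invs n (wordProd (w.take w.length)) = w.length := by
    rw [List.take_length, hprod]
    have h2 := invs_longest n
    omega
  have up : ∀ h, h ≤ w.length → invs n (wordProd (w.take h)) ≤ h := by
    intro h
    induction h with
    | zero => intro _; simp [wordProd, invs_one]
    | succ h ih =>
        intro hh
        rcases step h (by omega) with h1 | h1 <;>
          have := ih (by omega) <;> omega
  have down : ∀ d, d ≤ w.length → w.length - d ≤ invs n (wordProd (w.take (w.length - d))) := by
    intro d
    induction d with
    | zero => intro _; simp only [Nat.sub_zero]; omega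
    | succ d ih =>
        intro hd
        have ihd := ih (by omega)
        have heq : w.length - (d + 1) + 1 = w.length - d := by omega
        rcases step (w.length - (d + 1)) (by omega) with h1 | h1 <;>
          rw [heq] at h1 <;> omega
  intro h hh
  have h1 := up h hh
  have h2 := down (w.length - h) (by omega)
  rw [show w.length - (w.length - h) = h by omega] at h2
  omega

/-- at every node of a reduced wiring diagram, the smaller wire crosses from left to right. -/
lemma wireXY_lt {n : ℕ} {w : List ℕ} (hred : IsReduced n w)
    {h : ℕ} (hh : h < w.length) : wireX w (h + 1) < wireY w (h + 1) := by
  obtain ⟨hlen, hw, hprod⟩ := hred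
  have ha := letter_bounds hw hh
  have hne : wireX w (h+1) ≠ wireY w (h+1) := wireX_ne_wireY w h
  rcases lt_or_gt_of_ne hne with hlt | hgt
  · exact hlt
  · exfalso
    have hstep := invs_step' (wordProd (w.take h)) ha.1 ha.2 hgt
    rw [← prod_take_succ hh] at hstep
    rw [invs_take hw hlen hprod h (by omega),
      invs_take hw hlen hprod (h+1) (by omega)] at hstep
    omega

/-! ### the crossing order -/

/-- wires `x < y` have already crossed (weakly) above level `h`. -/
def crs (w : List ℕ) (h x y : ℕ) : Prop := col w h y < col w h x

lemma crs_zero {w : List ℕ} {x y : ℕ} (hxy : x < y) : ¬ crs w 0 x y := by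
  simp only [crs, col_zero]; omega

lemma longestPerm_symm_apply (n r : ℕ) : (longestPerm n).symm r = longestPerm n r := rfl

lemma crs_last {n : ℕ} {w : List ℕ} (hred : IsReduced n w)
    {x y : ℕ} (hx : 1 ≤ x) (hxy : x < y) (hy : y ≤ n + 1) : crs w w.length x y := by
  obtain ⟨hlen, hw, hprod⟩ := hred
  unfold crs col
  rw [List.take_length, hprod, longestPerm_symm_apply, longestPerm_symm_apply,
    longestPerm_apply, longestPerm_apply, if_pos (by omega : 1 ≤ x ∧ x ≤ n + 1),
    if_pos (by omega : 1 ≤ y ∧ y ≤ n + 1)]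
  omega

lemma crs_succ_iff {n : ℕ} {w : List ℕ} (hred : IsReduced n w)
    {h : ℕ} (hh : h < w.length) {x y : ℕ} (hxy : x < y) :
    crs w (h+1) x y ↔ crs w h x y ∨ (wireX w (h+1) = x ∧ wireY w (h+1) = y) := by
  have hXY := wireXY_lt hred hh
  have hxa := colX_above w h
  have hya := colY_above w h
  have hxb := colX_below hh
  have hyb := colY_below hh
  simp only [crs]
  by_cases h1 : x = wireX w (h+1)
  · by_cases h2 : y = wireY w (h+1)
    · constructor
      · intro _; exact Or.inr ⟨h1.symm, h2.symm⟩
      · intro _; rw [h1, h2, hxb, hyb]; omega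
    · have hyX : y ≠ wireX w (h+1) := fun hc => by rw [← h1] at hc; omega
      have hst := col_below_other hh hyX h2
      have hoth := col_above_other hyX h2
      have cxa : col w h x = w.getD h 0 := by rw [h1]; exact hxa
      have cxb : col w (h+1) x = w.getD h 0 + 1 := by rw [h1]; exact hxb
      have hne : ¬ (wireX w (h+1) = x ∧ wireY w (h+1) = y) := fun hc => h2 hc.2.symm
      rw [or_iff_left hne, hst, cxa, cxb]
      omega
  · by_cases h2 : x = wireY w (h+1)
    · have hyX : y ≠ wireX w (h+1) := fun hc => by
        rw [← hc] at hXY; rw [h2] at hxy; omega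
      have hyY : y ≠ wireY w (h+1) := fun hc => by rw [← h2] at hc; omega
      have hst := col_below_other hh hyX hyY
      have hoth := col_above_other hyX hyY
      have cxa : col w h x = w.getD h 0 + 1 := by rw [h2]; exact hya
      have cxb : col w (h+1) x = w.getD h 0 := by rw [h2]; exact hyb
      have hne : ¬ (wireX w (h+1) = x ∧ wireY w (h+1) = y) := fun hc => by
        rw [h2] at hc; exact absurd hc.1 (by omega)
      rw [or_iff_left hne, hst, cxa, cxb]
      omega
    · have hstx := col_below_other hh h1 h2
      have hothx := col_above_other h1 h2
      by_cases h3 : y = wireX w (h+1)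
      · have cya : col w h y = w.getD h 0 := by rw [h3]; exact hxa
        have cyb : col w (h+1) y = w.getD h 0 + 1 := by rw [h3]; exact hxb
        have hne : ¬ (wireX w (h+1) = x ∧ wireY w (h+1) = y) := fun hc => h1 hc.1.symm
        rw [or_iff_left hne, hstx, cya, cyb]
        omega
      · by_cases h4 : y = wireY w (h+1)
        · have cya : col w h y = w.getD h 0 + 1 := by rw [h4]; exact hya
          have cyb : col w (h+1) y = w.getD h 0 := by rw [h4]; exact hyb
          have hne : ¬ (wireX w (h+1) = x ∧ wireY w (h+1) = y) := fun hc => h1 hc.1.symm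
          rw [or_iff_left hne, hstx, cya, cyb]
          omega
        · have hsty := col_below_other hh h3 h4
          have hne : ¬ (wireX w (h+1) = x ∧ wireY w (h+1) = y) := fun hc => h1 hc.1.symm
          rw [or_iff_left hne, hstx, hsty]

lemma crs_mono {n : ℕ} {w : List ℕ} (hred : IsReduced n w)
    {x y : ℕ} (hxy : x < y) {h1 h2 : ℕ} (hle : h1 ≤ h2) (hh2 : h2 ≤ w.length)
    (hc : crs w h1 x y) : crs w h2 x y := by
  revert hh2
  induction h2, hle using Nat.le_induction with
  | base => intro _; exact hc
  | succ h2 hle ih =>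
      intro hh2
      exact (crs_succ_iff hred (by omega) hxy).mpr (Or.inl (ih (by omega)))

lemma crs_pair_below {n : ℕ} {w : List ℕ} (hred : IsReduced n w)
    {h : ℕ} (hh : h < w.length) : crs w (h+1) (wireX w (h+1)) (wireY w (h+1)) := by
  unfold crs
  rw [colX_below hh, colY_below hh]
  omega

lemma crs_pair_above {w : List ℕ} (h : ℕ) : ¬ crs w h (wireX w (h+1)) (wireY w (h+1)) := by
  unfold crs
  rw [colX_above, colY_above]
  omega


/-! ### nodes on a wire, `otherWire` -/

lemma mem_nodesOn {w : List ℕ} {r j : ℕ} :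
    j ∈ nodesOn w r ↔ (1 ≤ j ∧ j ≤ w.length ∧ NodeOnWire w j r) := by
  unfold nodesOn
  rw [List.mem_filter]
  simp only [List.mem_map, List.mem_range, decide_eq_true_eq]
  constructor
  · rintro ⟨⟨i, hi, rfl⟩, h2⟩; exact ⟨by omega, by omega, h2⟩
  · rintro ⟨h1, h2, h3⟩; exact ⟨⟨j - 1, by omega, by omega⟩, h3⟩

lemma nodesOn_sorted (w : List ℕ) (r : ℕ) : (nodesOn w r).Pairwise (· < ·) :=
  (((List.pairwise_lt_range (n := w.length)).map _ (fun a b hab => by omega : ∀ a b : ℕ,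
    a < b → a + 1 < b + 1)).filter _)

lemma nodesOn_nodup (w : List ℕ) (r : ℕ) : (nodesOn w r).Nodup :=
  (nodesOn_sorted w r).imp (fun h => Nat.ne_of_lt h)

lemma find?_sorted_min {p : ℕ → Bool} {m : ℕ} :
    ∀ {l : List ℕ}, l.Pairwise (· < ·) → l.find? p = some m →
      ∀ x ∈ l, x < m → p x = false := by
  intro l
  induction l with
  | nil => intro _ h; simp at h
  | cons b l ih =>
      intro hp hf x hx hxm
      rcases List.mem_cons.mp hx with rfl | hxl
      · by_cases hb : p x = true
        · rw [List.find?_cons_of_pos hb] at hf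
          injection hf with he
          omega
        · cases hpx : p x with
          | false => rfl
          | true => exact absurd hpx hb
      · by_cases hb : p b = true
        · rw [List.find?_cons_of_pos hb] at hf
          injection hf with he
          have := (List.pairwise_cons.mp hp).1 x hxl
          omega
        · rw [List.find?_cons_of_neg (by simpa using hb)] at hf
          exact ih (List.pairwise_cons.mp hp).2 hf x hxl hxm

lemma otherWire_ne {w : List ℕ} {j r : ℕ} (hXY : wireX w j ≠ wireY w j) :
    otherWire w j r ≠ r := by
  unfold otherWire
  by_cases hX : wireX w j = r
  · rw [if_pos hX, ← hX]
    exact fun hc => hXY hc.symm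
  · rw [if_neg hX]
    exact hX

lemma otherWire_onWire {w : List ℕ} {j r : ℕ} (hr : NodeOnWire w j r) :
    NodeOnWire w j (otherWire w j r) := by
  unfold otherWire
  by_cases hX : wireX w j = r
  · rw [if_pos hX]; exact Or.inr rfl
  · rw [if_neg hX]; exact Or.inl rfl

lemma otherWire_invol {w : List ℕ} {j r : ℕ} (hXY : wireX w j ≠ wireY w j)
    (hr : NodeOnWire w j r) : otherWire w j (otherWire w j r) = r := by
  unfold otherWire
  by_cases hX : wireX w j = r
  · rw [if_pos hX, if_neg hXY]
    exact hX
  · rw [if_neg hX, if_pos rfl]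
    rcases hr with h1 | h1
    · exact absurd h1 hX
    · exact h1

lemma pair_eq {n : ℕ} {w : List ℕ} (hred : IsReduced n w) {h : ℕ} (hh : h < w.length)
    {r q : ℕ} (hr : NodeOnWire w (h+1) r) (hq : NodeOnWire w (h+1) q) (hlt : r < q) :
    wireX w (h+1) = r ∧ wireY w (h+1) = q := by
  have hXY := wireXY_lt hred hh
  rcases hr with h1 | h1 <;> rcases hq with h2 | h2 <;> omega

lemma otherWire_pair {n : ℕ} {w : List ℕ} (hred : IsReduced n w) {h : ℕ} (hh : h < w.length)
    {r : ℕ} (hr : NodeOnWire w (h+1) r) :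
    (wireX w (h+1) = r ∧ wireY w (h+1) = otherWire w (h+1) r) ∨
    (wireY w (h+1) = r ∧ wireX w (h+1) = otherWire w (h+1) r) := by
  have hXY := wireXY_lt hred hh
  unfold otherWire
  rcases hr with h1 | h1
  · left; rw [if_pos h1]; exact ⟨h1, rfl⟩
  · right
    rw [if_neg (by omega)]
    exact ⟨h1, rfl⟩

/-! ### generic greedy walks -/

/-- first switch node strictly below `a` along wire `u` whose other wire triggers `T`. -/
def nextW (w : List ℕ) (T : ℕ → ℕ → Bool) (u a : ℕ) : Option ℕ :=
  (nodesOn w u).find? (fun j => a < j && T u (otherWire w j u))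

/-- the switch nodes (with new wires) of the greedy walk from state `(u, a)`. -/
def walkW (w : List ℕ) (T : ℕ → ℕ → Bool) : ℕ → ℕ → ℕ → List (ℕ × ℕ)
  | 0, _, _ => []
  | fuel+1, u, a =>
      match nextW w T u a with
      | none => []
      | some m => (m, otherWire w m u) :: walkW w T fuel (otherWire w m u) m

/-- the final wire of the greedy walk. -/
def finW (w : List ℕ) (T : ℕ → ℕ → Bool) : ℕ → ℕ → ℕ → ℕ
  | 0, u, _ => u
  | fuel+1, u, a =>
      match nextW w T u a with
      | none => u
      | some m => finW w T fuel (otherWire w m u) m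

/-- the wire of the greedy walk at level `h`. -/
def atW (w : List ℕ) (T : ℕ → ℕ → Bool) : ℕ → ℕ → ℕ → ℕ → ℕ
  | 0, u, _, _ => u
  | fuel+1, u, a, h =>
      match nextW w T u a with
      | none => u
      | some m => if h < m then u else atW w T fuel (otherWire w m u) m h

lemma nextW_some {w : List ℕ} {T : ℕ → ℕ → Bool} {u a m : ℕ}
    (h : nextW w T u a = some m) :
    (1 ≤ m ∧ m ≤ w.length ∧ NodeOnWire w m u) ∧ a < m ∧ T u (otherWire w m u) = true := by
  have h1 := List.mem_of_find?_eq_some h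
  have h2 := List.find?_some h
  rw [Bool.and_eq_true, decide_eq_true_eq] at h2
  exact ⟨mem_nodesOn.mp h1, h2.1, h2.2⟩

lemma nextW_min {w : List ℕ} {T : ℕ → ℕ → Bool} {u a m : ℕ}
    (h : nextW w T u a = some m) {j : ℕ} (hj1 : 1 ≤ j) (hj2 : j ≤ w.length)
    (hj3 : NodeOnWire w j u) (hja : a < j) (hjm : j < m) :
    T u (otherWire w j u) = false := by
  have h1 := find?_sorted_min (nodesOn_sorted w u) h j (mem_nodesOn.mpr ⟨hj1, hj2, hj3⟩) hjm
  rw [Bool.and_eq_false_iff] at h1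
  rcases h1 with h1 | h1
  · rw [decide_eq_false_iff_not] at h1; omega
  · exact h1

lemma nextW_none {w : List ℕ} {T : ℕ → ℕ → Bool} {u a : ℕ}
    (h : nextW w T u a = none) {j : ℕ} (hj1 : 1 ≤ j) (hj2 : j ≤ w.length)
    (hj3 : NodeOnWire w j u) (hja : a < j) :
    T u (otherWire w j u) = false := by
  have h1 := List.find?_eq_none.mp h j (mem_nodesOn.mpr ⟨hj1, hj2, hj3⟩)
  rw [Bool.and_eq_true, decide_eq_true_eq] at h1
  cases hT : T u (otherWire w j u) with
  | false => rfl
  | true => exact absurd ⟨hja, hT⟩ h1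

lemma atW_before {w : List ℕ} {T : ℕ → ℕ → Bool} {fuel u a h : ℕ}
    (hcond : ∀ m, nextW w T u a = some m → h < m) :
    atW w T fuel u a h = u := by
  cases fuel with
  | zero => rfl
  | succ fuel =>
      cases hn : nextW w T u a with
      | none => simp only [atW, hn]
      | some m =>
          simp only [atW, hn]
          rw [if_pos (hcond m hn)]

lemma atW_self {w : List ℕ} {T : ℕ → ℕ → Bool} (fuel u a : ℕ) :
    atW w T fuel u a a = u :=
  atW_before (fun m hm => (nextW_some hm).2.1)

lemma atW_unfold_some {w : List ℕ} {T : ℕ → ℕ → Bool} {fuel u a m h : ℕ}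
    (hn : nextW w T u a = some m) (hmh : m ≤ h) :
    atW w T (fuel + 1) u a h = atW w T fuel (otherWire w m u) m h := by
  simp only [atW, hn]
  rw [if_neg (by omega : ¬ h < m)]

lemma finW_unfold_some {w : List ℕ} {T : ℕ → ℕ → Bool} {fuel u a m : ℕ}
    (hn : nextW w T u a = some m) :
    finW w T (fuel + 1) u a = finW w T fuel (otherWire w m u) m := by
  simp only [finW, hn]

lemma finW_unfold_none {w : List ℕ} {T : ℕ → ℕ → Bool} {fuel u a : ℕ}
    (hn : nextW w T u a = none) :
    finW w T (fuel + 1) u a = u := by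
  simp only [finW, hn]

lemma atW_step {w : List ℕ} {T : ℕ → ℕ → Bool} :
    ∀ {fuel u a h : ℕ}, w.length < a + fuel → a ≤ h →
    atW w T fuel u a (h+1) = atW w T fuel u a h ∨
    (h + 1 ≤ w.length ∧ NodeOnWire w (h+1) (atW w T fuel u a h) ∧
      atW w T fuel u a (h+1) = otherWire w (h+1) (atW w T fuel u a h) ∧
      T (atW w T fuel u a h) (atW w T fuel u a (h+1)) = true) := by
  intro fuel
  induction fuel with
  | zero => intro u a h _ _; exact Or.inl rfl
  | succ fuel ih =>
      intro u a h hf hah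
      cases hn : nextW w T u a with
      | none =>
          left
          rw [atW_before (fun m' hm' => by cases hn.symm.trans hm'),
            atW_before (fun m' hm' => by cases hn.symm.trans hm')]
      | some m =>
          obtain ⟨⟨hm1, hm2, hm3⟩, ham, hT⟩ := nextW_some hn
          rcases Nat.lt_trichotomy (h+1) m with hc | hc | hc
          · left
            have e1 : atW w T (fuel+1) u a (h+1) = u := atW_before (fun m' hm' => by
              rw [hn] at hm'; injection hm' with he; omega)
            have e2 : atW w T (fuel+1) u a h = u := atW_before (fun m' hm' => by
              rw [hn] at hm'; injection hm' with he; omega)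
            rw [e1, e2]
          · have e2 : atW w T (fuel+1) u a h = u := atW_before (fun m' hm' => by
              rw [hn] at hm'; injection hm' with he; omega)
            have e1 : atW w T (fuel+1) u a (h+1) = otherWire w m u := by
              rw [atW_unfold_some hn (by omega), ← hc]
              exact atW_self fuel _ (h+1)
            right
            rw [e1, e2]
            refine ⟨by omega, ?_, ?_, ?_⟩
            · rw [hc]; exact hm3
            · rw [hc]
            · exact hT
          · have e1 := atW_unfold_some (fuel := fuel) hn (by omega : m ≤ h+1)
            have e2 := atW_unfold_some (fuel := fuel) hn (by omega : m ≤ h)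
            rw [e1, e2]
            exact ih (by omega) (by omega)

lemma atW_trigger_free {w : List ℕ} {T : ℕ → ℕ → Bool} :
    ∀ {fuel u a h : ℕ}, w.length < a + fuel → a ≤ h → h + 1 ≤ w.length →
    atW w T fuel u a (h+1) = atW w T fuel u a h →
    NodeOnWire w (h+1) (atW w T fuel u a h) →
    (∀ j r, 1 ≤ j → j ≤ w.length → NodeOnWire w j r → otherWire w j r ≠ r) →
    T (atW w T fuel u a h) (otherWire w (h+1) (atW w T fuel u a h)) = false := by
  intro fuel
  induction fuel with
  | zero => intro u a h hf _; omega
  | succ fuel ih =>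
      intro u a h hf hah hlen heq hon hother
      cases hn : nextW w T u a with
      | none =>
          have e2 : atW w T (fuel+1) u a h = u :=
            atW_before (fun m' hm' => by cases hn.symm.trans hm')
          rw [e2] at hon ⊢
          exact nextW_none hn (by omega) hlen hon (by omega)
      | some m =>
          obtain ⟨⟨hm1, hm2, hm3⟩, ham, hT⟩ := nextW_some hn
          rcases Nat.lt_trichotomy (h+1) m with hc | hc | hc
          · have e2 : atW w T (fuel+1) u a h = u := atW_before (fun m' hm' => by
              rw [hn] at hm'; injection hm' with he; omega)
            rw [e2] at hon ⊢
            exact nextW_min hn (by omega) hlen hon (by omega) hc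
          · exfalso
            have e2 : atW w T (fuel+1) u a h = u := atW_before (fun m' hm' => by
              rw [hn] at hm'; injection hm' with he; omega)
            have e1 : atW w T (fuel+1) u a (h+1) = otherWire w m u := by
              rw [atW_unfold_some hn (by omega), ← hc]
              exact atW_self fuel _ (h+1)
            rw [heq, e2] at e1
            exact hother m u hm1 hm2 hm3 e1.symm
          · have e1 := atW_unfold_some (fuel := fuel) hn (by omega : m ≤ h+1)
            have e2 := atW_unfold_some (fuel := fuel) hn (by omega : m ≤ h)
            rw [e1, e2] at heq
            rw [e2] at hon ⊢
            exact ih (by omega) (by omega) hlen heq hon hother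

lemma atW_late {w : List ℕ} {T : ℕ → ℕ → Bool} :
    ∀ {fuel u a h : ℕ}, w.length ≤ h → atW w T fuel u a h = finW w T fuel u a := by
  intro fuel
  induction fuel with
  | zero => intro u a h _; rfl
  | succ fuel ih =>
      intro u a h hh
      cases hn : nextW w T u a with
      | none => simp only [atW, finW, hn]
      | some m =>
          have hm := nextW_some hn
          simp only [atW, finW, hn]
          rw [if_neg (by omega : ¬ h < m)]
          exact ih hh

lemma finW_pres {w : List ℕ} {T : ℕ → ℕ → Bool} (P : ℕ → Prop)
    (hT : ∀ u x, T u x = true → P x) :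
    ∀ {fuel u a : ℕ}, P u → P (finW w T fuel u a) := by
  intro fuel
  induction fuel with
  | zero => intro u a hu; exact hu
  | succ fuel ih =>
      intro u a hu
      cases hn : nextW w T u a with
      | none => simp only [finW, hn]; exact hu
      | some m =>
          simp only [finW, hn]
          exact ih (hT _ _ (nextW_some hn).2.2)

lemma atW_range_incr {w : List ℕ} {T : ℕ → ℕ → Bool}
    (hT : ∀ u x, T u x = true → u < x) :
    ∀ {fuel u a h : ℕ}, u ≤ atW w T fuel u a h ∧ atW w T fuel u a h ≤ finW w T fuel u a := by
  intro fuel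
  induction fuel with
  | zero => intro u a h; exact ⟨le_refl _, le_refl _⟩
  | succ fuel ih =>
      intro u a h
      cases hn : nextW w T u a with
      | none => simp only [atW, finW, hn]; exact ⟨le_refl _, le_refl _⟩
      | some m =>
          have hux : u < otherWire w m u := hT _ _ (nextW_some hn).2.2
          have ih1 := ih (u := otherWire w m u) (a := m) (h := h)
          simp only [atW, finW, hn]
          by_cases hc : h < m
          · rw [if_pos hc]
            exact ⟨le_refl _, by omega⟩
          · rw [if_neg hc]
            exact ⟨by omega, ih1.2⟩

lemma atW_range_decr {w : List ℕ} {T : ℕ → ℕ → Bool}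
    (hT : ∀ u x, T u x = true → x < u) :
    ∀ {fuel u a h : ℕ}, finW w T fuel u a ≤ atW w T fuel u a h ∧ atW w T fuel u a h ≤ u := by
  intro fuel
  induction fuel with
  | zero => intro u a h; exact ⟨le_refl _, le_refl _⟩
  | succ fuel ih =>
      intro u a h
      cases hn : nextW w T u a with
      | none => simp only [atW, finW, hn]; exact ⟨le_refl _, le_refl _⟩
      | some m =>
          have hux : otherWire w m u < u := hT _ _ (nextW_some hn).2.2
          have ih1 := ih (u := otherWire w m u) (a := m) (h := h)
          simp only [atW, finW, hn]
          by_cases hc : h < m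
          · rw [if_pos hc]
            exact ⟨by omega, le_refl _⟩
          · rw [if_neg hc]
            exact ⟨ih1.1, by omega⟩

/-! ### node-index wrappers -/

lemma node_XY_lt {n : ℕ} {w : List ℕ} (hred : IsReduced n w) {m : ℕ}
    (h1 : 1 ≤ m) (h2 : m ≤ w.length) : wireX w m < wireY w m := by
  obtain ⟨m', rfl⟩ : ∃ m', m = m' + 1 := ⟨m - 1, by omega⟩
  exact wireXY_lt hred (by omega)

lemma node_other_ne {n : ℕ} {w : List ℕ} (hred : IsReduced n w) {m r : ℕ}
    (h1 : 1 ≤ m) (h2 : m ≤ w.length) : otherWire w m r ≠ r :=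
  otherWire_ne (Nat.ne_of_lt (node_XY_lt hred h1 h2))

lemma node_other_invol {n : ℕ} {w : List ℕ} (hred : IsReduced n w) {m r : ℕ}
    (h1 : 1 ≤ m) (h2 : m ≤ w.length) (hr : NodeOnWire w m r) :
    otherWire w m (otherWire w m r) = r :=
  otherWire_invol (Nat.ne_of_lt (node_XY_lt hred h1 h2)) hr

lemma node_pair_eq {n : ℕ} {w : List ℕ} (hred : IsReduced n w) {m : ℕ}
    (h1 : 1 ≤ m) (h2 : m ≤ w.length) {r q : ℕ} (hr : NodeOnWire w m r)
    (hq : NodeOnWire w m q) (hlt : r < q) : wireX w m = r ∧ wireY w m = q := by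
  obtain ⟨m', rfl⟩ : ∃ m', m = m' + 1 := ⟨m - 1, by omega⟩
  exact pair_eq hred (by omega) hr hq hlt

/-! ### the two greedy walks -/

/-- ascending-walk trigger: the other wire is bigger but still at most `n`. -/
def TA (n : ℕ) : ℕ → ℕ → Bool := fun u x => decide (u < x ∧ x ≤ n)

/-- descending-walk trigger: the other wire lies strictly between `al` and the current wire. -/
def TD (al : ℕ) : ℕ → ℕ → Bool := fun v x => decide (al < x ∧ x < v)

lemma TA_incr (n : ℕ) : ∀ u x, TA n u x = true → u < x := by
  intro u x h; rw [TA, decide_eq_true_eq] at h; omega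

lemma TA_le (n : ℕ) : ∀ u x, TA n u x = true → x ≤ n := by
  intro u x h; rw [TA, decide_eq_true_eq] at h; omega

lemma TD_decr (al : ℕ) : ∀ u x, TD al u x = true → x < u := by
  intro u x h; rw [TD, decide_eq_true_eq] at h; omega

lemma TD_gt (al : ℕ) : ∀ u x, TD al u x = true → al < x := by
  intro u x h; rw [TD, decide_eq_true_eq] at h; omega

lemma forbidden_self {w : List ℕ} (al j : ℕ) : ¬ Forbidden w al j al := by
  unfold Forbidden; omega

lemma forbidden_end {w : List ℕ} (al j : ℕ) : ¬ Forbidden w al j (al + 1) := by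
  unfold Forbidden; omega

lemma mem_segList {w : List ℕ} {r a b j : ℕ} :
    j ∈ segList w r a b ↔ (j ∈ nodesOn w r ∧ min a b < j ∧ j < max a b) := by
  unfold segList
  rw [List.mem_filter, decide_eq_true_eq]

lemma mem_tailList {w : List ℕ} {r a j : ℕ} :
    j ∈ tailList w r a ↔ (j ∈ nodesOn w r ∧ a < j) := by
  unfold tailList
  rw [List.mem_filter, decide_eq_true_eq]

/-- legality of the descending part of the canonical path. -/
lemma claimD {n : ℕ} {w : List ℕ} (hred : IsReduced n w) {al : ℕ} :
    ∀ fuel v b, al < v → finW w (TD al) fuel v b = al + 1 →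
    TravelOK w al v b ((walkW w (TD al) fuel v b).map Prod.fst) := by
  intro fuel
  induction fuel with
  | zero =>
      intro v b hv hfin
      show TravelOK w al v b []
      refine ⟨by rw [← hfin]; rfl, fun j _ => ?_⟩
      have : v = al + 1 := by rw [← hfin]; rfl
      rw [this]
      exact forbidden_end al j
  | succ fuel ih =>
      intro v b hv hfin
      cases hn : nextW w (TD al) v b with
      | none =>
          have hfin' : v = al + 1 := by rw [← hfin, finW_unfold_none hn]
          simp only [walkW, hn, List.map_nil]
          refine ⟨hfin', fun j _ => ?_⟩
          rw [hfin']
          exact forbidden_end al j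
      | some m =>
          obtain ⟨⟨hm1, hm2, hm3⟩, hbm, hT⟩ := nextW_some hn
          have hT' := hT
          rw [TD, decide_eq_true_eq] at hT'
          simp only [walkW, hn, List.map_cons]
          refine ⟨⟨hm1, hm2⟩, hm3, ?_, ?_, ?_⟩
          · rw [if_neg (by omega : ¬ v ≤ al)]; exact hbm
          · intro j hj
            rw [mem_segList] at hj
            obtain ⟨hj1, hj2, hj3⟩ := hj
            rw [mem_nodesOn] at hj1
            have hmin : min b m = b := by omega
            have hmax : max b m = m := by omega
            rw [hmin] at hj2; rw [hmax] at hj3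
            have := nextW_min hn hj1.1 hj1.2.1 hj1.2.2 hj2 hj3
            rw [TD, decide_eq_false_iff_not] at this
            unfold Forbidden
            omega
          · exact ih _ _ (by omega) (by rw [← finW_unfold_some hn]; exact hfin)

/-- legality of the ascending part of the canonical path. -/
lemma claimA {n : ℕ} {w : List ℕ} (hred : IsReduced n w) {al : ℕ} (haln : al ≤ n) :
    ∀ fuel u a, w.length < a + fuel → 1 ≤ a → a ≤ w.length → NodeOnWire w a u →
    finW w (TA n) fuel u a = al →
    ∀ cont, TravelOK w al (otherWire w a u) a cont →
    ∃ m rest, ((walkW w (TA n) fuel u a).reverse.map Prod.fst) ++ a :: cont = m :: rest ∧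
      (1 ≤ m ∧ m ≤ w.length) ∧ NodeOnWire w m al ∧
      (∀ j ∈ tailList w al m, ¬ Forbidden w al j al) ∧
      TravelOK w al (otherWire w m al) m rest := by
  intro fuel
  induction fuel with
  | zero => intro u a hF; omega
  | succ fuel ih =>
      intro u a hF ha1 ha2 hon hfin cont hcont
      cases hn : nextW w (TA n) u a with
      | none =>
          have hu : u = al := by rw [← hfin, finW_unfold_none hn]
          refine ⟨a, cont, ?_, ⟨ha1, ha2⟩, by rw [← hu]; exact hon, ?_, ?_⟩
          · simp [walkW, hn]
          · intro j _; exact forbidden_self al j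
          · rw [hu] at hcont; exact hcont
      | some m =>
          obtain ⟨⟨hm1, hm2, hm3⟩, ham, hT⟩ := nextW_some hn
          have hT' := hT
          rw [TA, decide_eq_true_eq] at hT'
          have hxy := node_XY_lt hred hm1 hm2
          have hother_on := otherWire_onWire hm3
          have hinvol := node_other_invol hred hm1 hm2 hm3
          have hule : u ≤ al := by
            have h1 := (atW_range_incr (w := w) (TA_incr n) (fuel := fuel + 1) (u := u) (a := a)
              (h := a)).2
            rw [atW_self, hfin] at h1
            exact h1
          have hnext : TravelOK w al (otherWire w m (otherWire w m u)) m (a :: cont) := by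
            rw [hinvol]
            refine ⟨⟨ha1, ha2⟩, hon, ?_, ?_, hcont⟩
            · rw [if_pos hule]; exact ham
            · intro j hj
              rw [mem_segList] at hj
              obtain ⟨hj1, hj2, hj3⟩ := hj
              rw [mem_nodesOn] at hj1
              have hmin : min m a = a := by omega
              have hmax : max m a = m := by omega
              rw [hmin] at hj2; rw [hmax] at hj3
              have := nextW_min hn hj1.1 hj1.2.1 hj1.2.2 hj2 hj3
              rw [TA, decide_eq_false_iff_not] at this
              unfold Forbidden
              omega
          obtain ⟨m', rest', heq, hres⟩ := ih (otherWire w m u) m (by omega) (by omega) hm2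
            hother_on (by rw [← finW_unfold_some hn]; exact hfin) (a :: cont) hnext
          refine ⟨m', rest', ?_, hres⟩
          simp only [walkW, hn, List.reverse_cons, List.map_append, List.map_cons,
            List.map_nil]
          rw [List.append_assoc]
          simpa using heq

/-! ### visited nodes along the walks -/

lemma visit_walk {w : List ℕ} {T : ℕ → ℕ → Bool} :
    ∀ fuel v b,
    (visitTail w v b ((walkW w T fuel v b).map Prod.fst)).Nodup ∧
    ∀ j ∈ visitTail w v b ((walkW w T fuel v b).map Prod.fst),
      b < j ∧ j ≤ w.length ∧ NodeOnWire w j (atW w T fuel v b j) := by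
  intro fuel
  induction fuel with
  | zero =>
      intro v b
      simp only [walkW, List.map_nil, visitTail]
      constructor
      · exact (nodesOn_nodup w v).filter _
      · intro j hj
        rw [mem_tailList, mem_nodesOn] at hj
        exact ⟨hj.2, hj.1.2.1, hj.1.2.2⟩
  | succ fuel ih =>
      intro v b
      cases hn : nextW w T v b with
      | none =>
          simp only [walkW, hn, List.map_nil, visitTail]
          constructor
          · exact (nodesOn_nodup w v).filter _
          · intro j hj
            rw [mem_tailList, mem_nodesOn] at hj
            refine ⟨hj.2, hj.1.2.1, ?_⟩
            rw [atW_before (fun m' hm' => by cases hn.symm.trans hm')]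
            exact hj.1.2.2
      | some m =>
          obtain ⟨⟨hm1, hm2, hm3⟩, hbm, hT⟩ := nextW_some hn
          obtain ⟨ihn, ihm⟩ := ih (otherWire w m v) m
          simp only [walkW, hn, List.map_cons, visitTail]
          have hseg : ∀ j ∈ segList w v b m, b < j ∧ j < m ∧ j ≤ w.length ∧
              NodeOnWire w j v := by
            intro j hj
            rw [mem_segList, mem_nodesOn] at hj
            have hmin : min b m = b := by omega
            have hmax : max b m = m := by omega
            rw [hmin, hmax] at hj
            exact ⟨hj.2.1, hj.2.2, hj.1.2.1, hj.1.2.2⟩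
          constructor
          · refine List.Nodup.append ((nodesOn_nodup w v).filter _) ?_ ?_
            · rw [List.nodup_cons]
              refine ⟨fun hc => ?_, ihn⟩
              exact absurd (ihm m hc).1 (by omega)
            · intro j hj hj2
              have h1 := (hseg j hj).2.1
              rcases List.mem_cons.mp hj2 with rfl | hj3
              · omega
              · exact absurd (ihm j hj3).1 (by omega)
          · intro j hj
            rcases List.mem_append.mp hj with hj1 | hj2
            · obtain ⟨hb, hm, hlen, hon⟩ := hseg j hj1
              refine ⟨hb, hlen, ?_⟩
              rw [atW_before (fun m' hm' => by rw [hn] at hm'; injection hm' with he; omega)]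
              exact hon
            · rcases List.mem_cons.mp hj2 with rfl | hj3
              · refine ⟨hbm, hm2, ?_⟩
                rw [atW_unfold_some hn (le_refl _), atW_self]
                exact otherWire_onWire hm3
              · obtain ⟨hb, hlen, hon⟩ := ihm j hj3
                refine ⟨by omega, hlen, ?_⟩
                rw [atW_unfold_some hn (by omega : m ≤ j)]
                exact hon

lemma visitA {n : ℕ} {w : List ℕ} (hred : IsReduced n w) {al : ℕ} :
    ∀ fuel u a, w.length < a + fuel → 1 ≤ a → a ≤ w.length → NodeOnWire w a u →
    finW w (TA n) fuel u a = al →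
    ∀ cont, ∃ V,
      visitList w al ((walkW w (TA n) fuel u a).reverse.map Prod.fst ++ a :: cont)
        = V ++ a :: visitTail w (otherWire w a u) a cont ∧
      V.Nodup ∧
      ∀ j ∈ V, a < j ∧ j ≤ w.length ∧ NodeOnWire w j (atW w (TA n) fuel u a j) := by
  intro fuel
  induction fuel with
  | zero => intro u a hF; omega
  | succ fuel ih =>
      intro u a hF ha1 ha2 hon hfin cont
      cases hn : nextW w (TA n) u a with
      | none =>
          have hu : u = al := by rw [← hfin, finW_unfold_none hn]
          refine ⟨tailList w al a, ?_, (nodesOn_nodup w al).filter _, ?_⟩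
          · simp only [walkW, hn, List.map_nil, List.reverse_nil, List.nil_append]
            show tailList w al a ++ a :: visitTail w (otherWire w a al) a cont = _
            rw [hu]
          · intro j hj
            rw [mem_tailList, mem_nodesOn] at hj
            refine ⟨hj.2, hj.1.2.1, ?_⟩
            rw [atW_before (fun m' hm' => by cases hn.symm.trans hm'), hu]
            exact hj.1.2.2
      | some m =>
          obtain ⟨⟨hm1, hm2, hm3⟩, ham, hT⟩ := nextW_some hn
          have hinvol := node_other_invol hred hm1 hm2 hm3
          obtain ⟨V', heq, hnd, hmem⟩ := ih (otherWire w m u) m (by omega) (by omega) hm2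
            (otherWire_onWire hm3) (by rw [← finW_unfold_some hn]; exact hfin) (a :: cont)
          have hlist : (walkW w (TA n) (fuel+1) u a).reverse.map Prod.fst ++ a :: cont
              = (walkW w (TA n) fuel (otherWire w m u) m).reverse.map Prod.fst
                ++ m :: (a :: cont) := by
            simp only [walkW, hn, List.reverse_cons, List.map_append, List.map_cons,
              List.map_nil]
            rw [List.append_assoc]
            rfl
          rw [hlist, heq, hinvol]
          have hvt : visitTail w u m (a :: cont)
              = segList w u m a ++ a :: visitTail w (otherWire w a u) a cont := rfl
          rw [hvt]
          refine ⟨V' ++ m :: segList w u m a, ?_, ?_, ?_⟩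
          · rw [List.append_assoc]; rfl
          · have hseg : ∀ j ∈ segList w u m a, a < j ∧ j < m ∧ j ≤ w.length ∧
                NodeOnWire w j u := by
              intro j hj
              rw [mem_segList, mem_nodesOn] at hj
              have hmin : min m a = a := by omega
              have hmax : max m a = m := by omega
              rw [hmin, hmax] at hj
              exact ⟨hj.2.1, hj.2.2, hj.1.2.1, hj.1.2.2⟩
            refine List.Nodup.append hnd ?_ ?_
            · rw [List.nodup_cons]
              refine ⟨fun hc => ?_, (nodesOn_nodup w u).filter _⟩
              exact absurd (hseg m hc).2.1 (by omega)
            · intro j hj hj2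
              have h1 := (hmem j hj).1
              rcases List.mem_cons.mp hj2 with rfl | hj3
              · omega
              · exact absurd (hseg j hj3).2.1 (by omega)
          · intro j hj
            rcases List.mem_append.mp hj with hj1 | hj2
            · obtain ⟨h1, h2, h3⟩ := hmem j hj1
              refine ⟨by omega, h2, ?_⟩
              rw [atW_unfold_some hn (by omega : m ≤ j)]
              exact h3
            · rcases List.mem_cons.mp hj2 with rfl | hj3
              · refine ⟨ham, hm2, ?_⟩
                rw [atW_unfold_some hn (le_refl j), atW_self]
                exact otherWire_onWire hm3
              · rw [mem_segList, mem_nodesOn] at hj3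
                have hmin : min m a = a := by omega
                have hmax : max m a = m := by omega
                rw [hmin, hmax] at hj3
                refine ⟨hj3.2.1, hj3.1.2.1, ?_⟩
                rw [atW_before (fun m' hm' => by rw [hn] at hm'; injection hm' with he; omega)]
                exact hj3.1.2.2

/-! ### wire sequences and switches along the walks -/

lemma wireSeq_walk {w : List ℕ} {T : ℕ → ℕ → Bool} :
    ∀ fuel v b, wireSeq w v ((walkW w T fuel v b).map Prod.fst)
      = v :: (walkW w T fuel v b).map Prod.snd := by
  intro fuel
  induction fuel with
  | zero => intro v b; rfl
  | succ fuel ih =>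
      intro v b
      cases hn : nextW w T v b with
      | none => simp only [walkW, hn, List.map_nil]; rfl
      | some m =>
          simp only [walkW, hn, List.map_cons]
          show v :: wireSeq w (otherWire w m v) _ = _
          rw [ih]

lemma pathSwitches_walk {w : List ℕ} {T : ℕ → ℕ → Bool} :
    ∀ fuel v b (P : ℕ → Prop), P v → (∀ u x, T u x = true → P x) →
    ∀ e ∈ pathSwitches w v ((walkW w T fuel v b).map Prod.fst), P e.2.1 ∧ P e.2.2 := by
  intro fuel
  induction fuel with
  | zero => intro v b P _ _ e he; simp [walkW, pathSwitches] at he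
  | succ fuel ih =>
      intro v b P hv hT e he
      cases hn : nextW w T v b with
      | none => simp [walkW, hn, pathSwitches] at he
      | some m =>
          simp only [walkW, hn, List.map_cons] at he
          have hx : P (otherWire w m v) := hT _ _ (nextW_some hn).2.2
          rcases List.mem_cons.mp he with rfl | he2
          · exact ⟨hv, hx⟩
          · exact ih (otherWire w m v) m P hx hT e he2

lemma wireSeqA {n : ℕ} {w : List ℕ} (hred : IsReduced n w) {al : ℕ} :
    ∀ fuel u a, w.length < a + fuel → 1 ≤ a → a ≤ w.length → NodeOnWire w a u →
    finW w (TA n) fuel u a = al →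
    ∀ cont, wireSeq w al ((walkW w (TA n) fuel u a).reverse.map Prod.fst ++ a :: cont)
      = ((walkW w (TA n) fuel u a).map Prod.snd).reverse ++ u :: wireSeq w (otherWire w a u) cont := by
  intro fuel
  induction fuel with
  | zero => intro u a hF; omega
  | succ fuel ih =>
      intro u a hF ha1 ha2 hon hfin cont
      cases hn : nextW w (TA n) u a with
      | none =>
          have hu : u = al := by rw [← hfin, finW_unfold_none hn]
          simp only [walkW, hn, List.map_nil, List.reverse_nil, List.nil_append]
          show al :: wireSeq w (otherWire w a al) cont = _
          rw [hu]
      | some m =>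
          obtain ⟨⟨hm1, hm2, hm3⟩, ham, hT⟩ := nextW_some hn
          have hinvol := node_other_invol hred hm1 hm2 hm3
          have hlist : (walkW w (TA n) (fuel+1) u a).reverse.map Prod.fst ++ a :: cont
              = (walkW w (TA n) fuel (otherWire w m u) m).reverse.map Prod.fst
                ++ m :: (a :: cont) := by
            simp only [walkW, hn, List.reverse_cons, List.map_append, List.map_cons,
              List.map_nil]
            rw [List.append_assoc]
            rfl
          rw [hlist, ih (otherWire w m u) m (by omega) (by omega) hm2 (otherWire_onWire hm3)
            (by rw [← finW_unfold_some hn]; exact hfin) (a :: cont), hinvol]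
          have : wireSeq w u (a :: cont) = u :: wireSeq w (otherWire w a u) cont := rfl
          rw [this]
          simp only [walkW, hn, List.map_cons, List.reverse_cons]
          rw [List.append_assoc]
          rfl

lemma pathSwitchesA {n : ℕ} {w : List ℕ} (hred : IsReduced n w) {al : ℕ} :
    ∀ fuel u a, w.length < a + fuel → 1 ≤ a → a ≤ w.length → NodeOnWire w a u →
    finW w (TA n) fuel u a = al →
    ∀ cont, ∃ Pre,
      pathSwitches w al ((walkW w (TA n) fuel u a).reverse.map Prod.fst ++ a :: cont)
        = Pre ++ (a, u, otherWire w a u) :: pathSwitches w (otherWire w a u) cont ∧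
      ∀ e ∈ Pre, e.2.1 ≤ al ∧ e.2.2 ≤ al := by
  intro fuel
  induction fuel with
  | zero => intro u a hF; omega
  | succ fuel ih =>
      intro u a hF ha1 ha2 hon hfin cont
      cases hn : nextW w (TA n) u a with
      | none =>
          have hu : u = al := by rw [← hfin, finW_unfold_none hn]
          refine ⟨[], ?_, by simp⟩
          simp only [walkW, hn, List.map_nil, List.reverse_nil, List.nil_append]
          show (a, al, otherWire w a al) :: pathSwitches w (otherWire w a al) cont = _
          rw [hu]
      | some m =>
          obtain ⟨⟨hm1, hm2, hm3⟩, ham, hT⟩ := nextW_some hn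
          have hinvol := node_other_invol hred hm1 hm2 hm3
          have hule : u ≤ al := by
            have h1 := (atW_range_incr (w := w) (TA_incr n) (fuel := fuel + 1) (u := u)
              (a := a) (h := a)).2
            rw [atW_self, hfin] at h1
            exact h1
          have hxle : otherWire w m u ≤ al := by
            have h1 := (atW_range_incr (w := w) (TA_incr n) (fuel := fuel) (u := otherWire w m u)
              (a := m) (h := m)).2
            rw [atW_self, ← finW_unfold_some hn, hfin] at h1
            exact h1
          obtain ⟨Pre', heq, hPre'⟩ := ih (otherWire w m u) m (by omega) (by omega) hm2
            (otherWire_onWire hm3) (by rw [← finW_unfold_some hn]; exact hfin) (a :: cont)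
          have hlist : (walkW w (TA n) (fuel+1) u a).reverse.map Prod.fst ++ a :: cont
              = (walkW w (TA n) fuel (otherWire w m u) m).reverse.map Prod.fst
                ++ m :: (a :: cont) := by
            simp only [walkW, hn, List.reverse_cons, List.map_append, List.map_cons,
              List.map_nil]
            rw [List.append_assoc]
            rfl
          refine ⟨Pre' ++ [(m, otherWire w m u, u)], ?_, ?_⟩
          · rw [hlist, heq, hinvol]
            have : pathSwitches w u (a :: cont)
                = (a, u, otherWire w a u) :: pathSwitches w (otherWire w a u) cont := rfl
            rw [this, List.append_assoc]
            rfl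
          · intro e he
            rcases List.mem_append.mp he with he1 | he2
            · exact hPre' e he1
            · rcases List.mem_cons.mp he2 with rfl | he3
              · exact ⟨hxle, hule⟩
              · simp at he3

/-! ### sortedness of the wire sequences -/

lemma walk_snd_chain_incr {n : ℕ} {w : List ℕ} :
    ∀ fuel u a, List.Chain' (· < ·) (u :: (walkW w (TA n) fuel u a).map Prod.snd) := by
  intro fuel
  induction fuel with
  | zero => intro u a; simp [walkW]; exact List.IsChain.singleton _
  | succ fuel ih =>
      intro u a
      cases hn : nextW w (TA n) u a with
      | none => simp [walkW, hn]; exact List.IsChain.singleton _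
      | some m =>
          simp only [walkW, hn, List.map_cons]
          unfold List.Chain'; rw [List.isChain_cons_cons]
          exact ⟨TA_incr n _ _ (nextW_some hn).2.2, ih (otherWire w m u) m⟩

lemma walk_snd_chain_decr {w : List ℕ} {al : ℕ} :
    ∀ fuel u a, List.Chain' (· > ·) (u :: (walkW w (TD al) fuel u a).map Prod.snd) := by
  intro fuel
  induction fuel with
  | zero => intro u a; simp [walkW]; exact List.IsChain.singleton _
  | succ fuel ih =>
      intro u a
      cases hn : nextW w (TD al) u a with
      | none => simp [walkW, hn]; exact List.IsChain.singleton _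
      | some m =>
          simp only [walkW, hn, List.map_cons]
          unfold List.Chain'; rw [List.isChain_cons_cons]
          exact ⟨TD_decr al _ _ (nextW_some hn).2.2, ih (otherWire w m u) m⟩

/-! ### the canonical walks from the crossing `t` of `ℓ_k` and `ℓ_{n+1}` -/

/-- wire of the ascending route at level `h`. -/
def auF (n : ℕ) (w : List ℕ) (k t h : ℕ) : ℕ := atW w (TA n) (w.length + 1) k t h

/-- final wire `α` of the ascending walk. -/
def alF (n : ℕ) (w : List ℕ) (k t : ℕ) : ℕ := finW w (TA n) (w.length + 1) k t

/-- wire of the descending route at level `h`. -/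
def dvF (n : ℕ) (w : List ℕ) (k t h : ℕ) : ℕ :=
  atW w (TD (alF n w k t)) (w.length + 1) (n + 1) t h

/-- final wire of the descending walk. -/
def dfF (n : ℕ) (w : List ℕ) (k t : ℕ) : ℕ :=
  finW w (TD (alF n w k t)) (w.length + 1) (n + 1) t

section Walks

variable {n : ℕ} {w : List ℕ} {k t : ℕ}

lemma au_self : auF n w k t t = k := atW_self _ _ _

lemma au_late {h : ℕ} (hh : w.length ≤ h) : auF n w k t h = alF n w k t := atW_late hh

lemma au_bounds (h : ℕ) : k ≤ auF n w k t h ∧ auF n w k t h ≤ alF n w k t :=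
  atW_range_incr (TA_incr n)

lemma al_le_n (hk2 : k ≤ n) : alF n w k t ≤ n :=
  finW_pres (fun x => x ≤ n) (TA_le n) hk2

lemma k_le_al : k ≤ alF n w k t := by
  have h := (au_bounds (n := n) (w := w) (k := k) (t := t) t).2
  rw [au_self] at h
  exact h

lemma dv_self : dvF n w k t t = n + 1 := atW_self _ _ _

lemma dv_late {h : ℕ} (hh : w.length ≤ h) : dvF n w k t h = dfF n w k t := atW_late hh

lemma dv_bounds (h : ℕ) : dfF n w k t ≤ dvF n w k t h ∧ dvF n w k t h ≤ n + 1 :=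
  atW_range_decr (TD_decr _)

lemma al_lt_df (hk2 : k ≤ n) : alF n w k t < dfF n w k t :=
  finW_pres (w := w) (T := TD (alF n w k t)) (fun x => alF n w k t < x) (TD_gt _)
    (fuel := w.length + 1) (u := n + 1) (a := t)
    (by have := al_le_n (w := w) (k := k) (t := t) hk2; omega)

lemma hF : w.length < t + (w.length + 1) := by omega

lemma au_step (hred : IsReduced n w) (hth : t ≤ h) :
    auF n w k t (h+1) = auF n w k t h ∨
    (h + 1 ≤ w.length ∧ wireX w (h+1) = auF n w k t h ∧ wireY w (h+1) = auF n w k t (h+1) ∧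
      auF n w k t h < auF n w k t (h+1) ∧ auF n w k t (h+1) ≤ n) := by
  rcases atW_step (T := TA n) (fuel := w.length + 1) (u := k) (a := t) (h := h) hF hth with
    h1 | ⟨h1, h2, h3, h4⟩
  · exact Or.inl h1
  · right
    rw [TA, decide_eq_true_eq] at h4
    have hon2 : NodeOnWire w (h+1) (auF n w k t (h+1)) := by
      rw [show auF n w k t (h+1) = otherWire w (h+1) (auF n w k t h) from h3]
      exact otherWire_onWire h2
    have := node_pair_eq hred (by omega) h1 h2 hon2 h4.1
    exact ⟨h1, this.1, this.2, h4.1, h4.2⟩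

lemma dv_step (hred : IsReduced n w) (hth : t ≤ h) :
    dvF n w k t (h+1) = dvF n w k t h ∨
    (h + 1 ≤ w.length ∧ wireX w (h+1) = dvF n w k t (h+1) ∧ wireY w (h+1) = dvF n w k t h ∧
      alF n w k t < dvF n w k t (h+1) ∧ dvF n w k t (h+1) < dvF n w k t h) := by
  rcases atW_step (T := TD (alF n w k t)) (fuel := w.length + 1) (u := n+1) (a := t) (h := h)
    hF hth with h1 | ⟨h1, h2, h3, h4⟩
  · exact Or.inl h1
  · right
    rw [TD, decide_eq_true_eq] at h4
    have hon2 : NodeOnWire w (h+1) (dvF n w k t (h+1)) := by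
      rw [show dvF n w k t (h+1) = otherWire w (h+1) (dvF n w k t h) from h3]
      exact otherWire_onWire h2
    have := node_pair_eq hred (by omega) h1 hon2 h2 h4.2
    exact ⟨h1, this.1, this.2, h4.1, h4.2⟩

lemma au_nofree (hred : IsReduced n w) (hth : t ≤ h) (hh1 : h + 1 ≤ w.length)
    (heq : auF n w k t (h+1) = auF n w k t h) (hon : NodeOnWire w (h+1) (auF n w k t h)) :
    ¬ (auF n w k t h < otherWire w (h+1) (auF n w k t h) ∧
        otherWire w (h+1) (auF n w k t h) ≤ n) := by
  have := atW_trigger_free (T := TA n) (fuel := w.length + 1) (u := k) (a := t) (h := h)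
    hF hth hh1 heq hon (fun j r h1 h2 _ => node_other_ne hred h1 h2)
  rw [TA, decide_eq_false_iff_not] at this
  exact this

lemma dv_nofree (hred : IsReduced n w) (hth : t ≤ h) (hh1 : h + 1 ≤ w.length)
    (heq : dvF n w k t (h+1) = dvF n w k t h) (hon : NodeOnWire w (h+1) (dvF n w k t h)) :
    ¬ (alF n w k t < otherWire w (h+1) (dvF n w k t h) ∧
        otherWire w (h+1) (dvF n w k t h) < dvF n w k t h) := by
  have := atW_trigger_free (T := TD (alF n w k t)) (fuel := w.length + 1) (u := n+1) (a := t)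
    (h := h) hF hth hh1 heq hon (fun j r h1 h2 _ => node_other_ne hred h1 h2)
  rw [TD, decide_eq_false_iff_not] at this
  exact this

variable (hred : IsReduced n w) (hk1 : 1 ≤ k) (hk2 : k ≤ n)
  (ht1 : 1 ≤ t) (ht2 : t ≤ w.length)
  (htk : NodeOnWire w t k) (htn : NodeOnWire w t (n+1))

include hred hk1 hk2 ht1 ht2 htk htn

lemma pair_t : wireX w t = k ∧ wireY w t = n + 1 :=
  node_pair_eq hred ht1 ht2 htk htn (by omega)

lemma crs_t : crs w t k (n + 1) := by
  obtain ⟨t', rfl⟩ : ∃ t', t = t' + 1 := ⟨t - 1, by omega⟩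
  have hp := pair_t hred hk1 hk2 ht1 ht2 htk htn
  have := crs_pair_below hred (by omega : t' < w.length)
  rw [hp.1, hp.2] at this
  exact this

/-- separation invariant: the ascending and descending routes have always already crossed. -/
lemma invS : ∀ h, t ≤ h → h ≤ w.length → crs w h (auF n w k t h) (dvF n w k t h) := by
  intro h hth hhN
  induction h, hth using Nat.le_induction with
  | base =>
      rw [au_self, dv_self]
      exact crs_t hred hk1 hk2 ht1 ht2 htk htn
  | succ h hth ih =>
      have ih' := ih (by omega)
      have haudv : auF n w k t h ≤ alF n w k t ∧ alF n w k t < dvF n w k t h := by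
        refine ⟨(au_bounds h).2, ?_⟩
        have := (dv_bounds (n := n) (w := w) (k := k) (t := t) h).1
        have := al_lt_df (w := w) (t := t) hk2
        omega
      rcases au_step hred hth with ha | ⟨ha1, ha2, ha3, ha4, ha5⟩ <;>
        rcases dv_step hred hth with hd | ⟨hd1, hd2, hd3, hd4, hd5⟩
      · rw [ha, hd]
        exact crs_mono hred (by omega) (by omega) hhN ih'
      · -- only dv switches
        rw [ha]
        have hauon : auF n w k t h ≠ wireX w (h+1) ∧ auF n w k t h ≠ wireY w (h+1) := by
          constructor
          · rw [hd2]; omega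
          · rw [hd3]
            intro hc
            rw [hc] at haudv
            omega
        have hst := col_below_other (by omega : h < w.length) hauon.1 hauon.2
        have hoth := col_above_other hauon.1 hauon.2
        have hya : col w h (wireY w (h+1)) = w.getD h 0 + 1 := colY_above w h
        have hxb : col w (h+1) (wireX w (h+1)) = w.getD h 0 + 1 :=
          colX_below (by omega : h < w.length)
        have ihc : col w h (dvF n w k t h) < col w h (auF n w k t h) := ih'
        rw [← hd3] at ihc
        show col w (h+1) (dvF n w k t (h+1)) < col w (h+1) (auF n w k t h)
        rw [← hd2, hst, hxb]
        omega
      · -- only au switches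
        rw [hd]
        have hdvon : dvF n w k t h ≠ wireX w (h+1) ∧ dvF n w k t h ≠ wireY w (h+1) := by
          constructor
          · rw [ha2]; intro hc; rw [hc] at haudv; omega
          · rw [ha3]
            intro hc
            rw [hc] at haudv
            have := (au_bounds (n := n) (w := w) (k := k) (t := t) (h+1)).2
            omega
        have hst := col_below_other (by omega : h < w.length) hdvon.1 hdvon.2
        have hoth := col_above_other hdvon.1 hdvon.2
        have hxa : col w h (wireX w (h+1)) = w.getD h 0 := colX_above w h
        have hyb : col w (h+1) (wireY w (h+1)) = w.getD h 0 :=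
          colY_below (by omega : h < w.length)
        have ihc : col w h (dvF n w k t h) < col w h (auF n w k t h) := ih'
        rw [← ha2] at ihc
        show col w (h+1) (dvF n w k t h) < col w (h+1) (auF n w k t (h+1))
        rw [← ha3, hst, hyb]
        omega
      · -- both switch : impossible
        exfalso
        rw [ha2] at hd2
        have := (au_bounds (n := n) (w := w) (k := k) (t := t) h).2
        omega

/-- the ascending route stays below the wire `ℓ_{n+1}`. -/
lemma invW : ∀ h, t ≤ h → h ≤ w.length → crs w h (auF n w k t h) (n + 1) := by
  intro h hth hhN
  induction h, hth using Nat.le_induction with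
  | base =>
      rw [au_self]
      exact crs_t hred hk1 hk2 ht1 ht2 htk htn
  | succ h hth ih =>
      have ih' := ih (by omega)
      have haun : auF n w k t h ≤ n ∧ auF n w k t (h+1) ≤ n := by
        have h1 := (au_bounds (n := n) (w := w) (k := k) (t := t) h).2
        have h2 := (au_bounds (n := n) (w := w) (k := k) (t := t) (h+1)).2
        have h3 := al_le_n (w := w) (t := t) hk2
        omega
      rcases au_step hred hth with ha | ⟨ha1, ha2, ha3, ha4, ha5⟩
      · rw [ha]
        exact crs_mono hred (by omega) (by omega) hhN ih'
      · have hnon : (n+1 : ℕ) ≠ wireX w (h+1) ∧ (n+1 : ℕ) ≠ wireY w (h+1) := by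
          constructor
          · rw [ha2]; omega
          · rw [ha3]; omega
        have hst := col_below_other (by omega : h < w.length) hnon.1 hnon.2
        have hoth := col_above_other hnon.1 hnon.2
        have hxa : col w h (wireX w (h+1)) = w.getD h 0 := colX_above w h
        have hyb : col w (h+1) (wireY w (h+1)) = w.getD h 0 :=
          colY_below (by omega : h < w.length)
        have ihc : col w h (n+1) < col w h (auF n w k t h) := ih'
        rw [← ha2] at ihc
        show col w (h+1) (n+1) < col w (h+1) (auF n w k t (h+1))
        rw [← ha3, hst, hyb]
        omega

/-- the descending route stays (weakly) below the wire `ℓ_{n+1}`. -/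
lemma invV : ∀ h, t ≤ h → h ≤ w.length →
    dvF n w k t h = n + 1 ∨ crs w h (dvF n w k t h) (n + 1) := by
  intro h hth hhN
  induction h, hth using Nat.le_induction with
  | base => exact Or.inl dv_self
  | succ h hth ih =>
      have ih' := ih (by omega)
      rcases dv_step hred hth with hd | ⟨hd1, hd2, hd3, hd4, hd5⟩
      · rw [hd]
        rcases ih' with h1 | h1
        · exact Or.inl h1
        · have hlt : dvF n w k t h < n + 1 := by
            have h2 := (dv_bounds (n := n) (w := w) (k := k) (t := t) h).2
            rcases Nat.lt_or_ge (dvF n w k t h) (n+1) with hc | hc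
            · exact hc
            · exfalso
              have heq2 : dvF n w k t h = n + 1 := by omega
              rw [heq2] at h1
              exact absurd h1 (by unfold crs; omega)
          exact Or.inr (crs_mono hred hlt (by omega) hhN h1)
      · right
        rcases ih' with h1 | h1
        · -- switching off the wire n+1 itself
          rw [h1] at hd3
          have := crs_pair_below hred (by omega : h < w.length)
          rw [hd2, hd3] at this
          exact this
        · -- switching between two wires < n+1
          have hdvlt : dvF n w k t h < n + 1 := by
            have h2 := (dv_bounds (n := n) (w := w) (k := k) (t := t) h).2
            rcases Nat.lt_or_ge (dvF n w k t h) (n+1) with hc | hc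
            · exact hc
            · exfalso
              have : dvF n w k t h = n + 1 := by omega
              rw [this] at h1
              exact absurd h1 (by unfold crs; omega)
          have hnon : (n+1 : ℕ) ≠ wireX w (h+1) ∧ (n+1 : ℕ) ≠ wireY w (h+1) := by
            constructor
            · rw [hd2]; omega
            · rw [hd3]; omega
          have hst := col_below_other (by omega : h < w.length) hnon.1 hnon.2
          have hoth := col_above_other hnon.1 hnon.2
          have hya : col w h (wireY w (h+1)) = w.getD h 0 + 1 := colY_above w h
          have hxb : col w (h+1) (wireX w (h+1)) = w.getD h 0 + 1 :=
            colX_below (by omega : h < w.length)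
          have ihc : col w h (n+1) < col w h (dvF n w k t h) := h1
          rw [← hd3] at ihc
          show col w (h+1) (n+1) < col w (h+1) (dvF n w k t (h+1))
          rw [← hd2, hst, hxb]
          omega

end Walks

lemma down_chain {N t0 : ℕ} (P : ℕ → Prop)
    (hiff : ∀ h, t0 ≤ h → h + 1 ≤ N → (P (h+1) ↔ P h)) (hN : P N) (ht : t0 ≤ N) : P t0 := by
  suffices hs : ∀ d h, t0 ≤ h → h ≤ N → N - h ≤ d → P h from hs N t0 (le_refl _) ht (by omega)
  intro d
  induction d with
  | zero =>
      intro h h1 h2 h3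
      have he : h = N := by omega
      rw [he]; exact hN
  | succ d ih =>
      intro h h1 h2 h3
      by_cases hc : h = N
      · rw [hc]; exact hN
      · exact (hiff h h1 (by omega)).mp (ih (h+1) (by omega) (by omega) (by omega))

section Walks2

variable {n : ℕ} {w : List ℕ} {k t : ℕ}
  (hred : IsReduced n w) (hk1 : 1 ≤ k) (hk2 : k ≤ n)
  (ht1 : 1 ≤ t) (ht2 : t ≤ w.length)
  (htk : NodeOnWire w t k) (htn : NodeOnWire w t (n+1))

include hred hk1 hk2 ht1 ht2 htk htn

lemma chainQ (haln : alF n w k t < n) : crs w t k (alF n w k t + 1) := by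
  set al := alF n w k t with hal
  have hmain : crs w t (auF n w k t t) (al + 1) := by
    refine down_chain (N := w.length) (fun h => crs w h (auF n w k t h) (al + 1)) ?_ ?_ ht2
    · intro h hth hh1
      show crs w (h+1) (auF n w k t (h+1)) (al + 1) ↔ crs w h (auF n w k t h) (al + 1)
      have haub : auF n w k t h ≤ al := (au_bounds h).2
      have haub1 : auF n w k t (h+1) ≤ al := (au_bounds (h+1)).2
      rcases au_step hred hth with ha | ⟨ha1, ha2, ha3, ha4, ha5⟩
      · by_cases hp : wireX w (h+1) = auF n w k t h ∧ wireY w (h+1) = al + 1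
        · exfalso
          have hon : NodeOnWire w (h+1) (auF n w k t h) := Or.inl hp.1
          have hoth : otherWire w (h+1) (auF n w k t h) = al + 1 := by
            unfold otherWire
            rw [if_pos hp.1]
            exact hp.2
          have := au_nofree hred hth hh1 ha hon
          rw [hoth] at this
          exact this ⟨by omega, by omega⟩
        · rw [ha, crs_succ_iff hred (by omega) (by omega : auF n w k t h < al + 1),
            or_iff_left hp]
      · have hne1 : (al + 1 : ℕ) ≠ wireX w (h+1) := by rw [ha2]; omega
        have hne2 : (al + 1 : ℕ) ≠ wireY w (h+1) := by rw [ha3]; omega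
        have hst := col_below_other (by omega : h < w.length) hne1 hne2
        have hoth := col_above_other hne1 hne2
        have hxa : col w h (wireX w (h+1)) = w.getD h 0 := colX_above w h
        have hyb : col w (h+1) (wireY w (h+1)) = w.getD h 0 :=
          colY_below (by omega : h < w.length)
        show crs w (h+1) (auF n w k t (h+1)) (al+1) ↔ crs w h (auF n w k t h) (al+1)
        unfold crs
        rw [← ha2, ← ha3, hst, hyb, hxa]
    · show crs w w.length (auF n w k t w.length) (al + 1)
      rw [au_late (le_refl _)]
      exact crs_last hred (by have := k_le_al (n := n) (w := w) (k := k) (t := t); omega)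
        (by omega) (by omega)
  rw [au_self] at hmain
  exact hmain

lemma chainR (hdf : alF n w k t + 1 < dfF n w k t) : crs w t (alF n w k t + 1) (n + 1) := by
  set al := alF n w k t with hal
  have hdfn : dfF n w k t ≤ n + 1 := by
    have := (dv_bounds (n := n) (w := w) (k := k) (t := t) w.length).2
    rw [dv_late (le_refl _)] at this
    exact this
  have hmain : crs w t (al + 1) (dvF n w k t t) := by
    refine down_chain (N := w.length) (fun h => crs w h (al + 1) (dvF n w k t h)) ?_ ?_ ht2
    · intro h hth hh1
      show crs w (h+1) (al + 1) (dvF n w k t (h+1)) ↔ crs w h (al + 1) (dvF n w k t h)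
      have hdvb : dfF n w k t ≤ dvF n w k t h := (dv_bounds h).1
      have hdvb1 : dfF n w k t ≤ dvF n w k t (h+1) := (dv_bounds (h+1)).1
      rcases dv_step hred hth with hd | ⟨hd1, hd2, hd3, hd4, hd5⟩
      · by_cases hp : wireX w (h+1) = al + 1 ∧ wireY w (h+1) = dvF n w k t h
        · exfalso
          have hon : NodeOnWire w (h+1) (dvF n w k t h) := Or.inr hp.2
          have hoth : otherWire w (h+1) (dvF n w k t h) = al + 1 := by
            unfold otherWire
            rw [if_neg (by rw [hp.1]; omega), hp.1]
          have := dv_nofree hred hth hh1 hd hon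
          rw [hoth] at this
          exact this ⟨by omega, by omega⟩
        · rw [hd, crs_succ_iff hred (by omega) (by omega : al + 1 < dvF n w k t h),
            or_iff_left hp]
      · have hne1 : (al + 1 : ℕ) ≠ wireX w (h+1) := by rw [hd2]; omega
        have hne2 : (al + 1 : ℕ) ≠ wireY w (h+1) := by rw [hd3]; omega
        have hst := col_below_other (by omega : h < w.length) hne1 hne2
        have hoth := col_above_other hne1 hne2
        have hya : col w h (wireY w (h+1)) = w.getD h 0 + 1 := colY_above w h
        have hxb : col w (h+1) (wireX w (h+1)) = w.getD h 0 + 1 :=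
          colX_below (by omega : h < w.length)
        show crs w (h+1) (al+1) (dvF n w k t (h+1)) ↔ crs w h (al+1) (dvF n w k t h)
        unfold crs
        rw [← hd2, ← hd3, hst, hxb, hya]
    · show crs w w.length (al + 1) (dvF n w k t w.length)
      rw [dv_late (le_refl _)]
      exact crs_last hred (by omega) (by omega) hdfn
  rw [dv_self] at hmain
  exact hmain

/-- **Claim 2** : the descending greedy walk ends on wire `α + 1`. -/
lemma claim2 : dfF n w k t = alF n w k t + 1 := by
  by_contra hne
  have h1 : alF n w k t < dfF n w k t := al_lt_df hk2
  have hdf : alF n w k t + 1 < dfF n w k t := by omega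
  have hdfn : dfF n w k t ≤ n + 1 := by
    have := (dv_bounds (n := n) (w := w) (k := k) (t := t) w.length).2
    rw [dv_late (le_refl _)] at this
    exact this
  have haln : alF n w k t < n := by omega
  have hQ := chainQ hred hk1 hk2 ht1 ht2 htk htn haln
  have hR := chainR hred hk1 hk2 ht1 ht2 htk htn hdf
  obtain ⟨t', rfl⟩ : ∃ t', t = t' + 1 := ⟨t - 1, by omega⟩
  have hp := pair_t hred hk1 hk2 ht1 ht2 htk htn
  have hck : col w (t'+1) k = w.getD t' 0 + 1 := by
    rw [← hp.1]; exact colX_below (by omega)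
  have hcn : col w (t'+1) (n+1) = w.getD t' 0 := by
    rw [← hp.2]; exact colY_below (by omega)
  have hQ' : col w (t'+1) (alF n w k (t'+1) + 1) < col w (t'+1) k := hQ
  have hR' : col w (t'+1) (n+1) < col w (t'+1) (alF n w k (t'+1) + 1) := hR
  omega

/-- the ascending and descending routes visit no common node strictly below `t`. -/
lemma no_common {j : ℕ} (hjt : t < j) (hjN : j ≤ w.length)
    (hja : NodeOnWire w j (auF n w k t j)) (hjd : NodeOnWire w j (dvF n w k t j)) : False := by
  obtain ⟨h, rfl⟩ : ∃ h, j = h + 1 := ⟨j - 1, by omega⟩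
  have hlt : auF n w k t (h+1) < dvF n w k t (h+1) := by
    have h1 := (au_bounds (n := n) (w := w) (k := k) (t := t) (h+1)).2
    have h2 := (dv_bounds (n := n) (w := w) (k := k) (t := t) (h+1)).1
    have h3 := al_lt_df (n := n) (w := w) (k := k) (t := t) hk2
    omega
  have hpair := node_pair_eq hred (by omega) hjN hja hjd hlt
  have hau : auF n w k t h = auF n w k t (h+1) := by
    rcases au_step hred (by omega : t ≤ h) with ha | ⟨ha1, ha2, ha3, ha4, ha5⟩
    · exact ha.symm
    · exfalso
      have h1 := (au_bounds (n := n) (w := w) (k := k) (t := t) (h+1)).2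
      have h2 := (dv_bounds (n := n) (w := w) (k := k) (t := t) (h+1)).1
      have h3 := al_lt_df (n := n) (w := w) (k := k) (t := t) hk2
      rw [hpair.2] at ha3
      omega
  have hdv : dvF n w k t h = dvF n w k t (h+1) := by
    rcases dv_step hred (by omega : t ≤ h) with hd | ⟨hd1, hd2, hd3, hd4, hd5⟩
    · exact hd.symm
    · exfalso
      have h1 := (au_bounds (n := n) (w := w) (k := k) (t := t) (h+1)).2
      rw [hpair.1] at hd2
      omega
  have hS := invS hred hk1 hk2 ht1 ht2 htk htn h (by omega) (by omega)
  rw [hau, hdv] at hS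
  rw [← hpair.1, ← hpair.2] at hS
  exact crs_pair_above h hS

end Walks2

lemma wireCol_eq_col (w : List ℕ) (j r : ℕ) : wireCol w j r = col w j r := rfl

lemma col_on_node {w : List ℕ} {h r : ℕ} (hh : h < w.length) (hon : NodeOnWire w (h+1) r) :
    col w (h+1) r = w.getD h 0 ∨ col w (h+1) r = w.getD h 0 + 1 := by
  rcases hon with h1 | h1
  · right; rw [← h1]; exact colX_below hh
  · left; rw [← h1]; exact colY_below hh

end S10

/-- existence of `D`-canonical paths.
Let `t` be the node at which `ℓ_k` and `ℓ_{n+1}` intersect.  There is a rigorous path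
with unique peak `t`, switching from `ℓ_k` to `ℓ_{n+1}` at `t`, staying (weakly) below
the wire `ℓ_{n+1}`, whose wire-expression is
`ℓ_{r_p} → ⋯ → ℓ_{r_1} → ℓ_k → ℓ_{n+1} → ℓ_{s_q} → ⋯ → ℓ_{s_1}` with
`r_1 < ⋯ < r_p` and `s_1 > ⋯ > s_q` (so the travel-order lists `rs = [r_p,…,r_1]`
and `ss = [s_q,…,s_1]` are both strictly decreasing). -/
theorem statement10 (n : ℕ) (hn : 1 ≤ n) (i : List ℕ) (hi : IsReduced n i)
    (k : ℕ) (hk1 : 1 ≤ k) (hk2 : k ≤ n) (t : ℕ) (ht : ValidNode i t)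
    (htk : NodeOnWire i t k) (htn : NodeOnWire i t (n + 1)) :
    ∃ (k' : ℕ) (ms rs ss : List ℕ),
      IsGPPath n i k' ms ∧
      peaks i k' ms = [t] ∧
      (t, k, n + 1) ∈ pathSwitches i k' ms ∧
      (∀ j ∈ visitList i k' ms, ¬ AboveWireLast n i j) ∧
      wireSeq i k' ms = rs ++ k :: (n + 1) :: ss ∧
      rs.Pairwise (· > ·) ∧ ss.Pairwise (· > ·) := by
  classical
  obtain ⟨ht1, ht2⟩ := ht
  have hred := hi
  have hk_al : k ≤ S10.alF n i k t := S10.k_le_al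
  have hal_n : S10.alF n i k t ≤ n := S10.al_le_n hk2
  have hal1 : 1 ≤ S10.alF n i k t := by omega
  have hp := S10.pair_t hred hk1 hk2 ht1 ht2 htk htn
  have how : otherWire i t k = n + 1 := by
    unfold otherWire
    rw [if_pos hp.1]
    exact hp.2
  have hdf := S10.claim2 hred hk1 hk2 ht1 ht2 htk htn
  set al := S10.alF n i k t with hal
  set F := i.length + 1 with hFdef
  have hfinA : S10.finW i (S10.TA n) F k t = al := by rw [hal]; rfl
  have hcontD : TravelOK i al (n+1) t ((S10.walkW i (S10.TD al) F (n+1) t).map Prod.fst) :=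
    S10.claimD hred F (n+1) t (by omega) hdf
  have hcont : TravelOK i al (otherWire i t k) t ((S10.walkW i (S10.TD al) F (n+1) t).map Prod.fst) := by
    rw [how]; exact hcontD
  obtain ⟨m1, rest, hms_eq, hm1v, hm1on, htail, htrav⟩ :=
    S10.claimA hred hal_n F k t (by omega) ht1 ht2 htk hfinA ((S10.walkW i (S10.TD al) F (n+1) t).map Prod.fst) hcont
  obtain ⟨V, hVeq, hVnd, hVmem⟩ :=
    S10.visitA hred F k t (by omega) ht1 ht2 htk hfinA ((S10.walkW i (S10.TD al) F (n+1) t).map Prod.fst)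
  rw [how] at hVeq
  have hVD := S10.visit_walk (w := i) (T := S10.TD al) F (n+1) t
  obtain ⟨Pre, hPSeq, hPre⟩ :=
    S10.pathSwitchesA hred F k t (by omega) ht1 ht2 htk hfinA ((S10.walkW i (S10.TD al) F (n+1) t).map Prod.fst)
  rw [how] at hPSeq
  have hDmem := S10.pathSwitches_walk (w := i) (T := S10.TD al) F (n+1) t
    (fun x => al < x) (by omega) (S10.TD_gt al)
  refine ⟨al, (S10.walkW i (S10.TA n) F k t).reverse.map Prod.fst
      ++ t :: (S10.walkW i (S10.TD al) F (n+1) t).map Prod.fst,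
    ((S10.walkW i (S10.TA n) F k t).map Prod.snd).reverse,
    (S10.walkW i (S10.TD al) F (n+1) t).map Prod.snd, ?_, ?_, ?_, ?_, ?_, ?_, ?_⟩
  · -- IsGPPath
    refine ⟨hal1, hal_n, ?_, ?_⟩
    · rw [hms_eq]
      exact ⟨⟨hm1v.1, hm1v.2⟩, hm1on, htail, htrav⟩
    · -- Nodup
      rw [hVeq]
      refine List.Nodup.append hVnd ?_ ?_
      · rw [List.nodup_cons]
        refine ⟨fun hc => ?_, hVD.1⟩
        exact absurd (hVD.2 t hc).1 (lt_irrefl t)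
      · intro j hjV hjtVD
        have h1 := hVmem j hjV
        rcases List.mem_cons.mp hjtVD with rfl | hj2
        · omega
        · have h2 := hVD.2 j hj2
          exact S10.no_common hred hk1 hk2 ht1 ht2 htk htn h1.1 h1.2.1 h1.2.2 h2.2.2
  · -- peaks = [t]
    have hfilter : (pathSwitches i al ((S10.walkW i (S10.TA n) F k t).reverse.map Prod.fst
        ++ t :: (S10.walkW i (S10.TD al) F (n+1) t).map Prod.fst)).filter
        (fun e => decide (e.2.1 ≤ al ∧ al < e.2.2)) = [(t, k, n+1)] := by
      rw [hPSeq, List.filter_append]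
      have h1 : Pre.filter (fun e => decide (e.2.1 ≤ al ∧ al < e.2.2)) = [] := by
        rw [List.filter_eq_nil_iff]
        intro e he
        have := hPre e he
        simp only [decide_eq_true_eq]
        omega
      have h2 : (pathSwitches i (n+1) ((S10.walkW i (S10.TD al) F (n+1) t).map Prod.fst)).filter
          (fun e => decide (e.2.1 ≤ al ∧ al < e.2.2)) = [] := by
        rw [List.filter_eq_nil_iff]
        intro e he
        have := hDmem e he
        simp only [decide_eq_true_eq]
        omega
      rw [h1, List.nil_append, List.filter_cons_of_pos (by
        simp only [decide_eq_true_eq]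
        exact ⟨hk_al, by omega⟩), h2]
    unfold peaks
    rw [hfilter]
    rfl
  · -- (t, k, n+1) ∈ pathSwitches
    rw [hPSeq]
    exact List.mem_append_right _ (List.mem_cons_self)
  · -- below the wire n+1
    intro j hj
    rw [hVeq] at hj
    intro hA
    unfold AboveWireLast at hA
    rw [S10.wireCol_eq_col] at hA
    rcases List.mem_append.mp hj with hjV | hjt
    · have h1 := hVmem j hjV
      obtain ⟨h, rfl⟩ : ∃ h, j = h + 1 := ⟨j - 1, by omega⟩
      have hW := S10.invW hred hk1 hk2 ht1 ht2 htk htn (h+1) (by omega) h1.2.1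
      have hon := S10.col_on_node (by omega : h < i.length) h1.2.2
      have hcr : S10.col i (h+1) (n+1) < S10.col i (h+1) (S10.atW i (S10.TA n) F k t (h+1)) := hW
      have hlet : letterAt i (h+1) = i.getD h 0 := rfl
      rw [hlet] at hA
      omega
    · rcases List.mem_cons.mp hjt with rfl | hjD
      · obtain ⟨t', rfl⟩ : ∃ t', j = t' + 1 := ⟨j - 1, by omega⟩
        have hcn : S10.col i (t'+1) (n+1) = i.getD t' 0 := by
          rw [← hp.2]; exact S10.colY_below (by omega)
        have hlet : letterAt i (t'+1) = i.getD t' 0 := rfl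
        rw [hlet, hcn] at hA
        omega
      · have h2 := hVD.2 j hjD
        obtain ⟨h, rfl⟩ : ∃ h, j = h + 1 := ⟨j - 1, by omega⟩
        have hV' := S10.invV hred hk1 hk2 ht1 ht2 htk htn (h+1) (by omega) h2.2.1
        have hde : S10.atW i (S10.TD al) F (n+1) t (h+1) = S10.dvF n i k t (h+1) := rfl
        have hon := S10.col_on_node (by omega : h < i.length) h2.2.2
        rw [hde] at hon
        have hlet : letterAt i (h+1) = i.getD h 0 := rfl
        rw [hlet] at hA
        rcases hV' with hV1 | hV1
        · rw [hV1] at hon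
          omega
        · have hcr : S10.col i (h+1) (n+1) < S10.col i (h+1) (S10.dvF n i k t (h+1)) := hV1
          omega
  · -- wireSeq
    have h1 := S10.wireSeqA hred F k t (by omega) ht1 ht2 htk hfinA ((S10.walkW i (S10.TD al) F (n+1) t).map Prod.fst)
    rw [how] at h1
    rw [h1, S10.wireSeq_walk]
  · -- rs sorted
    have hch := S10.walk_snd_chain_incr (n := n) (w := i) F k t
    have hpw := (List.isChain_iff_pairwise.mp hch).of_cons
    rw [List.pairwise_reverse]
    exact hpw.imp (fun hab => hab)
  · -- ss sorted
    have hch := S10.walk_snd_chain_decr (w := i) (al := al) F (n+1) t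
    exact (List.isChain_iff_pairwise.mp hch).of_cons

end StringPolytope
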